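/- arXiv:0906.5083 — 6 statements merged into one kernel-verified Lean document; each statement's English description precedes it below -/
import Mathlib

section
/- Let (Ω, 𝒜, P) be a probability space and D : ℝ≥0 × Ω → ℝ≥0 a stochastic process (each D(s) is a random variable) such that almost every sample path s ↦ D(s,ω) is nondecreasing, right-continuous, and tends to ∞ as s → ∞. Define E(t) = inf{ s ≥ 0 : D(s) > t }. Then for any fixed s₁,…,sₙ ≥ 0, the equality P[D(sᵢ) < tᵢ for i = 1,…,n] = P[E(tᵢ) > sᵢ for i = 1,…,n] holds for Lebesgue-almost every (t₁,…,tₙ) ∈ ℝⁿ≥0. Moreover, if almost every sample path of D is strictly increasing, then this equality holds for all t₁,…,tₙ ≥ 0. -/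
open Filter MeasureTheory Set

/-- If the path is monotone, right-continuous, tends to infinity, and `D s₀ < t`,
then the first passage time over `t` is strictly greater than `s₀`. -/
lemma aux_lt_inv (D : ℝ → ℝ) (hmono : MonotoneOn D (Ici 0))
    (hrc : ∀ s, 0 ≤ s → ContinuousWithinAt D (Ici s) s)
    (htend : Tendsto D atTop atTop)
    {t s₀ : ℝ} (hs₀ : 0 ≤ s₀) (h : D s₀ < t) :
    s₀ < sInf {s : ℝ | 0 ≤ s ∧ t < D s} := by
  have hev : D ⁻¹' Iio t ∈ nhdsWithin s₀ (Ici s₀) := hrc s₀ hs₀ (Iio_mem_nhds h)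
  rcases Metric.mem_nhdsWithin_iff.1 hev with ⟨δ, hδ, hball⟩
  have hne : {s : ℝ | 0 ≤ s ∧ t < D s}.Nonempty := by
    obtain ⟨u, hu1, hu2⟩ := ((htend.eventually_gt_atTop t).and (eventually_ge_atTop (0:ℝ))).exists
    exact ⟨u, hu2, hu1⟩
  have hlb : s₀ + δ / 2 ≤ sInf {s : ℝ | 0 ≤ s ∧ t < D s} := by
    apply le_csInf hne
    intro u hu
    by_contra hcon
    push_neg at hcon
    have hu2 : t < D u := hu.2
    rcases le_or_gt u s₀ with h1 | h1
    · have := hmono hu.1 hs₀ h1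
      linarith
    · have : u ∈ Metric.ball s₀ δ ∩ Ici s₀ := by
        constructor
        · rw [Metric.mem_ball, Real.dist_eq, abs_of_pos (by linarith)]
          linarith
        · exact le_of_lt h1
      have := hball this
      simp only [mem_preimage, mem_Iio] at this
      linarith
  linarith

lemma aux_inv_le (D : ℝ → ℝ) {t s₀ : ℝ} (hs₀ : 0 ≤ s₀) (h : t < D s₀) :
    sInf {s : ℝ | 0 ≤ s ∧ t < D s} ≤ s₀ :=
  csInf_le ⟨0, fun _ hu => hu.1⟩ ⟨hs₀, h⟩

lemma aux_strict (D : ℝ → ℝ) (hstrict : StrictMonoOn D (Ici 0))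
    {t s₀ : ℝ} (hs₀ : 0 ≤ s₀) (h : D s₀ = t) :
    sInf {s : ℝ | 0 ≤ s ∧ t < D s} ≤ s₀ := by
  apply le_of_forall_pos_le_add
  intro ε hε
  have hmem : s₀ + ε ∈ Ici (0:ℝ) := by simp only [mem_Ici]; linarith
  have hlt : D s₀ < D (s₀ + ε) := hstrict hs₀ hmem (by linarith)
  exact aux_inv_le D (by linarith) (by linarith)

/-- Let `D` be a stochastic process on a probability space whose
sample paths are a.s. nonnegative, nondecreasing, right-continuous, and tend to `∞`,
and let `E t = inf {s ≥ 0 : D s > t}` be its inverse. Then for fixed `s₁,…,sₙ ≥ 0`,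
`P[D sᵢ < tᵢ, i = 1,…,n] = P[E tᵢ > sᵢ, i = 1,…,n]` for Lebesgue-a.e.
`(t₁,…,tₙ) ∈ ℝⁿ≥0`; and if the paths are a.s. strictly increasing, the equality
holds for all `t₁,…,tₙ ≥ 0`. -/
theorem inverse_process_tail_eq {Ω : Type*} [MeasurableSpace Ω]
    (P : Measure Ω) [IsProbabilityMeasure P]
    (D : ℝ → Ω → ℝ) (hmeas : ∀ s : ℝ, Measurable (D s))
    (hpath : ∀ᵐ ω ∂P, MonotoneOn (fun s => D s ω) (Ici 0) ∧
      (∀ s : ℝ, 0 ≤ s → 0 ≤ D s ω) ∧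
      (∀ s : ℝ, 0 ≤ s → ContinuousWithinAt (fun u => D u ω) (Ici s) s) ∧
      Tendsto (fun s => D s ω) atTop atTop)
    (E : ℝ → Ω → ℝ) (hE : ∀ t ω, E t ω = sInf {s : ℝ | 0 ≤ s ∧ t < D s ω})
    (n : ℕ) (s : Fin n → ℝ) (hs : ∀ i, 0 ≤ s i) :
    (∀ᵐ t ∂(volume : Measure (Fin n → ℝ)), (∀ i, 0 ≤ t i) →
      P {ω | ∀ i, D (s i) ω < t i} = P {ω | ∀ i, s i < E (t i) ω}) ∧
    ((∀ᵐ ω ∂P, StrictMonoOn (fun u => D u ω) (Ici 0)) →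
      ∀ t : Fin n → ℝ, (∀ i, 0 ≤ t i) →
        P {ω | ∀ i, D (s i) ω < t i} = P {ω | ∀ i, s i < E (t i) ω}) := by
  classical
  -- a.e. inclusion A ⊆ B
  have hAB : ∀ (t : Fin n → ℝ),
      P {ω | ∀ i, D (s i) ω < t i} ≤ P {ω | ∀ i, s i < E (t i) ω} := by
    intro t
    apply measure_mono_ae
    filter_upwards [hpath] with ω hω hmem i
    obtain ⟨hmono, _, hrc, htend⟩ := hω
    rw [hE]
    exact aux_lt_inv _ hmono hrc htend (hs i) (hmem i)
  -- a.e. inclusion B ⊆ C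
  have hBC : ∀ (t : Fin n → ℝ),
      P {ω | ∀ i, s i < E (t i) ω} ≤ P {ω | ∀ i, D (s i) ω ≤ t i} := by
    intro t
    apply measure_mono_ae
    filter_upwards [hpath] with ω hω hmem i
    by_contra hcon
    push_neg at hcon
    have := aux_inv_le (fun u => D u ω) (hs i) hcon
    rw [← hE (t i) ω] at this
    exact absurd (hmem i) (not_lt.2 this)
  constructor
  · -- a.e. t statement
    have hcnt : ∀ i : Fin n, Set.Countable {x : ℝ | 0 < P {ω | D (s i) ω = x}} :=
      fun i => Measure.countable_meas_level_set_pos (hmeas (s i))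
    have hnull : (volume : Measure (Fin n → ℝ))
        (⋃ i, (fun t : Fin n → ℝ => t i) ⁻¹' {x : ℝ | 0 < P {ω | D (s i) ω = x}}) = 0 := by
      apply measure_iUnion_null
      intro i
      rw [MeasureTheory.volume_pi]
      exact Measure.pi_eval_preimage_null _ ((hcnt i).measure_zero _)
    filter_upwards [compl_mem_ae_iff.2 hnull] with t ht htpos
    have ht' : ∀ i : Fin n, P {ω | D (s i) ω = t i} = 0 := by
      intro i
      by_contra hne
      exact ht (mem_iUnion.2 ⟨i, pos_iff_ne_zero.2 hne⟩)
    refine le_antisymm (hAB t) ?_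
    have hC : P {ω | ∀ i, D (s i) ω ≤ t i} ≤ P {ω | ∀ i, D (s i) ω < t i} := by
      have hsub : {ω | ∀ i, D (s i) ω ≤ t i} ⊆
          {ω | ∀ i, D (s i) ω < t i} ∪ ⋃ i, {ω | D (s i) ω = t i} := by
        intro ω hω
        by_cases hlt : ∀ i, D (s i) ω < t i
        · exact Or.inl hlt
        · push_neg at hlt
          obtain ⟨i, hi⟩ := hlt
          exact Or.inr (mem_iUnion.2 ⟨i, le_antisymm (hω i) hi⟩)
      calc P {ω | ∀ i, D (s i) ω ≤ t i}
          ≤ P ({ω | ∀ i, D (s i) ω < t i} ∪ ⋃ i, {ω | D (s i) ω = t i}) :=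
            measure_mono hsub
        _ ≤ P {ω | ∀ i, D (s i) ω < t i} + P (⋃ i, {ω | D (s i) ω = t i}) :=
            measure_union_le _ _
        _ = P {ω | ∀ i, D (s i) ω < t i} := by
            rw [measure_iUnion_null (fun i => ht' i), add_zero]
    exact (hBC t).trans hC
  · -- strict case
    intro hstrict t ht
    apply le_antisymm (hAB t)
    have : P {ω | ∀ i, s i < E (t i) ω} ≤ P {ω | ∀ i, D (s i) ω < t i} := by
      apply measure_mono_ae
      filter_upwards [hpath, hstrict] with ω hω hsω hmem i
      obtain ⟨hmono, _, _, _⟩ := hω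
      rcases lt_or_ge (D (s i) ω) (t i) with h | h
      · exact h
      rcases lt_or_eq_of_le h with h | h
      · have := aux_inv_le (fun u => D u ω) (hs i) h
        rw [← hE (t i) ω] at this
        exact absurd (hmem i) (not_lt.2 this)
      · have := aux_strict (fun u => D u ω) hsω (hs i) h.symm
        rw [← hE (t i) ω] at this
        exact absurd (hmem i) (not_lt.2 this)
    exact this
end

section
/- Let D be a Lévy subordinator with Laplace exponent φ, not identically zero (so φ(λ) > 0 for λ > 0 and D(s) → ∞ a.s.), and let E(t) = inf{ s ≥ 0 : D(s) > t } be its inverse. For λ₁,…,λₙ > 0 and 0 = s₀ ≤ s₁ ≤ s₂ ≤ ⋯ ≤ sₙ, the Laplace transform of the n-time tail distribution satisfies the closed-form expression: ∫_{ℝⁿ≥0} exp(−Σᵢλᵢtᵢ) · P[E(tᵢ) > sᵢ, i = 1,…,n] dt₁⋯dtₙ = (λ₁⋯λₙ)⁻¹ · exp( −Σᵢ₌₁ⁿ φ(λᵢ + ⋯ + λₙ)·(sᵢ − sᵢ₋₁) ). -/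
open Filter MeasureTheory ProbabilityTheory Set

/-- A Lévy subordinator `D` on a probability space `(Ω, P)` with Laplace exponent `φ`:
`D 0 = 0` a.s., sample paths a.s. nonnegative, nondecreasing and right-continuous,
independent and stationary increments, and `𝔼[exp(−λ D s)] = exp(−s φ(λ))` for all
`λ, s ≥ 0` (with `φ` taking nonnegative values on `[0,∞)`). -/
structure IsLevySubordinator {Ω : Type*} [MeasurableSpace Ω] (P : Measure Ω)
    (D : ℝ → Ω → ℝ) (φ : ℝ → ℝ) : Prop where
  isProbability : IsProbabilityMeasure P
  measurable : ∀ s : ℝ, Measurable (D s)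
  init : ∀ᵐ ω ∂P, D 0 ω = 0
  mono : ∀ᵐ ω ∂P, MonotoneOn (fun s => D s ω) (Ici 0)
  nonneg : ∀ᵐ ω ∂P, ∀ s : ℝ, 0 ≤ s → 0 ≤ D s ω
  rightCont : ∀ᵐ ω ∂P, ∀ s : ℝ, 0 ≤ s →
    ContinuousWithinAt (fun u => D u ω) (Ici s) s
  indepIncrements : ∀ (n : ℕ) (s : ℕ → ℝ), s 0 = 0 → Monotone s →
    iIndepFun
      (fun i : Fin n => fun ω => D (s (i + 1)) ω - D (s i) ω) P
  stationaryIncrements : ∀ s t : ℝ, 0 ≤ s → s ≤ t →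
    P.map (fun ω => D t ω - D s ω) = P.map (D (t - s))
  phi_nonneg : ∀ lam : ℝ, 0 ≤ lam → 0 ≤ φ lam
  laplace : ∀ lam s : ℝ, 0 ≤ lam → 0 ≤ s →
    ∫ ω, Real.exp (-(lam * D s ω)) ∂P = Real.exp (-(s * φ lam))

lemma aux_integral_exp_Ioi {b : ℝ} (hb : 0 < b) (c : ℝ) :
    ∫ x in Ioi c, Real.exp (-(b * x)) = b⁻¹ * Real.exp (-(b * c)) := by
  have hderiv : ∀ x ∈ Ici c, HasDerivAt (fun x => -b⁻¹ * Real.exp (-(b * x)))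
      (Real.exp (-(b * x))) x := by
    intro x _
    have h1 : HasDerivAt (fun x : ℝ => -(b * x)) (-b) x := by
      simpa using ((hasDerivAt_id x).const_mul (-b))
    have h2 := (h1.exp).const_mul (-b⁻¹)
    refine h2.congr_deriv ?_
    rw [mul_comm (Real.exp _) (-b), ← mul_assoc, neg_mul_neg, inv_mul_cancel₀ hb.ne', one_mul]
  have hint : IntegrableOn (fun x => Real.exp (-(b * x))) (Ioi c) := by
    simpa [neg_mul] using exp_neg_integrableOn_Ioi c hb
  have harg : Tendsto (fun x : ℝ => -(b * x)) atTop atBot := by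
    have : Tendsto (fun x : ℝ => b * x) atTop atTop :=
      Tendsto.const_mul_atTop hb tendsto_id
    exact tendsto_neg_atTop_atBot.comp this
  have htend : Tendsto (fun x => -b⁻¹ * Real.exp (-(b * x))) atTop (nhds 0) := by
    have := (Real.tendsto_exp_atBot.comp harg).const_mul (-b⁻¹)
    simpa using this
  have := integral_Ioi_of_hasDerivAt_of_tendsto' hderiv hint htend
  rw [this]; ring

lemma aux_fin_tele {n : ℕ} (a : Fin (n + 1) → ℝ) (j : Fin n) :
    ∑ i ∈ Finset.Iic j, (a i.succ - a i.castSucc) = a j.succ - a 0 := by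
  cases n with
  | zero => exact j.elim0
  | succ m =>
    induction j using Fin.induction with
    | zero =>
      have : Finset.Iic (0 : Fin (m + 1)) = {0} := by
        ext i; simp [Fin.le_zero_iff]
      simp [this]
    | succ j ihj =>
      have hins : Finset.Iic j.succ = insert j.succ (Finset.Iic j.castSucc) := by
        ext i
        simp only [Finset.mem_Iic, Finset.mem_insert, Fin.le_def, Fin.ext_iff,
          Fin.val_succ, Fin.coe_castSucc]
        omega
      have hnm : j.succ ∉ Finset.Iic j.castSucc := by
        simp [Finset.mem_Iic, Fin.le_def]
      rw [hins, Finset.sum_insert hnm, ihj, Fin.succ_castSucc]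
      ring

lemma aux_abel {n : ℕ} (lam : Fin n → ℝ) (a : Fin (n + 1) → ℝ) :
    ∑ i : Fin n, (∑ j ∈ Finset.Ici i, lam j) * (a i.succ - a i.castSucc)
      = ∑ i : Fin n, lam i * (a i.succ - a 0) := by
  simp_rw [Finset.sum_mul]
  rw [Finset.sum_comm' (t' := Finset.univ) (s' := fun j => Finset.Iic j)
    (by intro i j; simp)]
  congr 1
  ext j
  rw [← Finset.mul_sum, aux_fin_tele]

lemma aux_indep_prod {Ω : Type*} [MeasurableSpace Ω] {P : Measure Ω}
    [IsProbabilityMeasure P] {n : ℕ} {f : Fin n → Ω → ℝ}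
    (hindep : iIndepFun f P)
    (hmeas : ∀ i, Measurable (f i)) (hint : ∀ i, Integrable (f i) P) (s : Finset (Fin n)) :
    Integrable (∏ i ∈ s, f i) P ∧
      ∫ ω, (∏ i ∈ s, f i) ω ∂P = ∏ i ∈ s, ∫ ω, f i ω ∂P := by
  classical
  induction s using Finset.induction with
  | empty => simp only [Finset.prod_empty]; exact ⟨integrable_const (1 : ℝ), by simp⟩
  | @insert j s hj ih =>
    have hIndep : IndepFun (∏ i ∈ s, f i) (f j) P :=
      hindep.indepFun_finset_prod_of_notMem hmeas hj
    have hmul := hIndep.symm.integrable_mul (hint j) ih.1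
    have hmul' := hIndep.symm.integral_mul_eq_mul_integral (hint j).aestronglyMeasurable ih.1.aestronglyMeasurable
    rw [Finset.prod_insert hj, Finset.prod_insert hj]
    exact ⟨hmul, by rw [show (∫ ω, (f j * ∏ i ∈ s, f i) ω ∂P)
      = integral P (f j * ∏ i ∈ s, f i) from rfl, hmul', ih.2]⟩

/-- A.s. the sample paths are unbounded. -/
lemma aux_growth {Ω : Type*} [MeasurableSpace Ω] {P : Measure Ω} {D : ℝ → Ω → ℝ} {φ : ℝ → ℝ}
    (h : IsLevySubordinator P D φ) (hφ1 : 0 < φ 1) :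
    ∀ᵐ ω ∂P, ∀ c : ℝ, ∃ u : ℝ, 0 ≤ u ∧ c < D u ω := by
  haveI := h.isProbability
  have hm : ∀ m : ℕ, P {ω | ∀ u : ℝ, 0 ≤ u → D u ω ≤ (m : ℝ)} = 0 := by
    intro m
    set S := {ω | ∀ u : ℝ, 0 ≤ u → D u ω ≤ (m : ℝ)} with hS
    have hbound : ∀ k : ℕ, (P S).toReal ≤ Real.exp ((m : ℝ) - k * φ 1) := by
      intro k
      have hfmeas : Measurable (fun ω => Real.exp (-(1 * D (k : ℝ) ω))) :=
        Real.measurable_exp.comp ((h.measurable (k : ℝ)).const_mul 1).neg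
      have hfint : Integrable (fun ω => Real.exp (-(1 * D (k : ℝ) ω))) P := by
        refine Integrable.mono' (integrable_const 1) hfmeas.aestronglyMeasurable ?_
        filter_upwards [h.nonneg] with ω hω
        rw [Real.norm_eq_abs, abs_of_pos (Real.exp_pos _)]
        exact Real.exp_le_one_iff.2 (by nlinarith [hω (k : ℝ) (Nat.cast_nonneg k)])
      have hmarkov := mul_meas_ge_le_integral_of_nonneg
        (ae_of_all _ fun ω => (Real.exp_pos (-(1 * D (k : ℝ) ω))).le) hfint (Real.exp (-(m : ℝ)))
      rw [h.laplace 1 (k : ℝ) zero_le_one (Nat.cast_nonneg k)] at hmarkov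
      have hsub : S ⊆ {ω | Real.exp (-(m : ℝ)) ≤ Real.exp (-(1 * D (k : ℝ) ω))} := by
        intro ω hω
        have := hω (k : ℝ) (Nat.cast_nonneg k)
        exact Real.exp_le_exp.2 (by linarith)
      have h1 : (P S).toReal ≤
          (P {ω | Real.exp (-(m : ℝ)) ≤ Real.exp (-(1 * D (k : ℝ) ω))}).toReal :=
        ENNReal.toReal_mono (measure_ne_top _ _) (measure_mono hsub)
      have hem : (0:ℝ) < Real.exp (-(m : ℝ)) := Real.exp_pos _
      have h2 : Real.exp (-(m : ℝ)) * (P S).toReal ≤ Real.exp (-((k : ℝ) * φ 1)) :=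
        le_trans (by rw [measureReal_def]; nlinarith) hmarkov
      have : (P S).toReal ≤ Real.exp (-((k : ℝ) * φ 1)) / Real.exp (-(m : ℝ)) :=
        (le_div_iff₀ hem).2 (by linarith [h2])
      calc (P S).toReal ≤ Real.exp (-((k : ℝ) * φ 1)) / Real.exp (-(m : ℝ)) := this
        _ = Real.exp ((m : ℝ) - k * φ 1) := by
            rw [← Real.exp_sub]; ring_nf
    have htend : Tendsto (fun k : ℕ => Real.exp ((m : ℝ) - k * φ 1)) atTop (nhds 0) := by
      apply Real.tendsto_exp_atBot.comp
      have h1 : Tendsto (fun k : ℕ => (k : ℝ) * φ 1) atTop atTop :=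
        Tendsto.atTop_mul_const hφ1 tendsto_natCast_atTop_atTop
      have := tendsto_atBot_add_const_left atTop (m : ℝ) (tendsto_neg_atTop_atBot.comp h1)
      simpa [sub_eq_add_neg, Function.comp] using this
    have hle0 : (P S).toReal ≤ 0 := ge_of_tendsto htend (Eventually.of_forall hbound)
    have : (P S).toReal = 0 := le_antisymm hle0 ENNReal.toReal_nonneg
    have hne : P S ≠ ⊤ := measure_ne_top _ _
    rcases (ENNReal.toReal_eq_zero_iff _).1 this with h0 | h0
    · exact h0
    · exact absurd h0 hne
  have hae : ∀ᵐ ω ∂P, ∀ m : ℕ, ¬ (∀ u : ℝ, 0 ≤ u → D u ω ≤ (m : ℝ)) := by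
    rw [ae_all_iff]
    intro m
    exact measure_eq_zero_iff_ae_notMem.1 (hm m)
  filter_upwards [hae] with ω hω c
  obtain ⟨m, hmc⟩ := exists_nat_ge c
  push_neg at hω
  obtain ⟨u, hu0, hu⟩ := hω m
  exact ⟨u, hu0, lt_of_le_of_lt hmc hu⟩

set_option maxHeartbeats 1000000 in
/-- The expectation of `exp(-∑ λᵢ D(sᵢ₊₁))`. -/
lemma aux_key {Ω : Type*} [MeasurableSpace Ω] {P : Measure Ω} {D : ℝ → Ω → ℝ} {φ : ℝ → ℝ}
    (h : IsLevySubordinator P D φ) (n : ℕ) (s : Fin (n + 1) → ℝ) (hs0 : s 0 = 0)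
    (hmono : Monotone s) (lam : Fin n → ℝ) (hlam : ∀ i, 0 < lam i) :
    ∫ ω, Real.exp (-∑ i : Fin n, lam i * D (s i.succ) ω) ∂P
      = Real.exp (-∑ i : Fin n, φ (∑ j ∈ Finset.Ici i, lam j) * (s i.succ - s i.castSucc)) := by
  haveI := h.isProbability
  set μ : Fin n → ℝ := fun i => ∑ j ∈ Finset.Ici i, lam j with hμdef
  have hμpos : ∀ i, 0 < μ i := fun i =>
    Finset.sum_pos (fun j _ => hlam j) ⟨i, Finset.mem_Ici.2 le_rfl⟩
  have hs_nonneg : ∀ i, 0 ≤ s i := fun i => hs0 ▸ hmono (Fin.zero_le i)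
  set X : Fin n → Ω → ℝ := fun i ω => D (s i.succ) ω - D (s i.castSucc) ω with hXdef
  have hXmeas : ∀ i, Measurable (X i) := fun i => (h.measurable _).sub (h.measurable _)
  have hXindep : iIndepFun X P := by
    set sN : ℕ → ℝ := fun k => s ⟨min k n, by omega⟩ with hsNdef
    have h0 : sN 0 = 0 := by
      have : (⟨min 0 n, by omega⟩ : Fin (n+1)) = 0 := by ext; simp
      rw [hsNdef]; simp only; rw [this, hs0]
    have hmN : Monotone sN := fun a b hab => hmono (by simp only [Fin.mk_le_mk]; omega)
    have hii := h.indepIncrements n sN h0 hmN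
    have heq : (fun (i : Fin n) => fun ω => D (sN (↑i + 1)) ω - D (sN ↑i) ω) = X := by
      funext i ω
      have hi := i.isLt
      have h1 : sN (↑i + 1) = s i.succ := by
        rw [hsNdef]; simp only
        apply congrArg s
        rw [Fin.ext_iff]
        simp only [Fin.val_succ]
        show min ((i : ℕ) + 1) n = (i : ℕ) + 1
        omega
      have h2 : sN ↑i = s i.castSucc := by
        rw [hsNdef]; simp only
        apply congrArg s
        rw [Fin.ext_iff]
        simp only [Fin.coe_castSucc]
        show min (↑i) n = ↑i
        omega
      rw [hXdef]; simp only [h1, h2]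
    rwa [heq] at hii
  set Y : Fin n → Ω → ℝ := fun i ω => Real.exp (-(μ i * X i ω)) with hYdef
  have hYmeas : ∀ i, Measurable (Y i) := fun i =>
    Real.measurable_exp.comp ((hXmeas i).const_mul (μ i)).neg
  have hXnn : ∀ i, ∀ᵐ ω ∂P, 0 ≤ X i ω := by
    intro i
    filter_upwards [h.mono] with ω hmon
    have := hmon (hs_nonneg i.castSucc) (hs_nonneg i.succ) (hmono (Fin.castSucc_lt_succ (i := i)).le)
    simpa [hXdef] using sub_nonneg.2 this
  have hYint : ∀ i, Integrable (Y i) P := by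
    intro i
    refine Integrable.mono' (integrable_const 1) (hYmeas i).aestronglyMeasurable ?_
    filter_upwards [hXnn i] with ω hω
    rw [Real.norm_eq_abs, abs_of_pos (Real.exp_pos _)]
    exact Real.exp_le_one_iff.2 (by nlinarith [(hμpos i).le])
  have hYindep : iIndepFun Y P := by
    have := hXindep.comp (fun i u => Real.exp (-(μ i * u)))
      (fun i => Real.measurable_exp.comp ((measurable_id.const_mul (μ i)).neg))
    exact this
  have hYval : ∀ i, ∫ ω, Y i ω ∂P
      = Real.exp (-((s i.succ - s i.castSucc) * φ (μ i))) := by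
    intro i
    have hcs : s i.castSucc ≤ s i.succ := hmono (Fin.castSucc_lt_succ (i := i)).le
    have hmap := h.stationaryIncrements (s i.castSucc) (s i.succ) (hs_nonneg _) hcs
    have hcont : Continuous (fun x : ℝ => Real.exp (-(μ i * x))) :=
      Real.continuous_exp.comp (continuous_const.mul continuous_id).neg
    calc ∫ ω, Y i ω ∂P
        = ∫ x, Real.exp (-(μ i * x)) ∂(P.map (X i)) :=
          (integral_map (hXmeas i).aemeasurable hcont.aestronglyMeasurable).symm
      _ = ∫ x, Real.exp (-(μ i * x)) ∂(P.map (D (s i.succ - s i.castSucc))) := by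
          rw [show P.map (X i) = P.map (D (s i.succ - s i.castSucc)) from hmap]
      _ = ∫ ω, Real.exp (-(μ i * D (s i.succ - s i.castSucc) ω)) ∂P :=
          integral_map (h.measurable _).aemeasurable hcont.aestronglyMeasurable
      _ = Real.exp (-((s i.succ - s i.castSucc) * φ (μ i))) :=
          h.laplace _ _ (hμpos i).le (by linarith)
  have hprod := aux_indep_prod hYindep hYmeas hYint Finset.univ
  have hae : ∀ᵐ ω ∂P,
      Real.exp (-∑ i : Fin n, lam i * D (s i.succ) ω) = (∏ i, Y i) ω := by
    filter_upwards [h.init] with ω h0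
    have ha0 : D (s 0) ω = 0 := by rw [hs0]; exact h0
    have habel := aux_abel lam (fun j => D (s j) ω)
    rw [ha0] at habel
    simp only [sub_zero] at habel
    rw [Finset.prod_apply]
    have : ∀ i, Y i ω = Real.exp (-(μ i * X i ω)) := fun i => rfl
    rw [Finset.prod_congr rfl fun i _ => this i, ← Real.exp_sum]
    have hsum : -∑ i : Fin n, lam i * D (s i.succ) ω = ∑ i : Fin n, -(μ i * X i ω) := by
      rw [Finset.sum_neg_distrib, neg_inj, ← habel]
    rw [hsum]
  rw [integral_congr_ae hae, hprod.2]
  rw [Finset.prod_congr rfl fun i _ => hYval i, ← Real.exp_sum]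
  congr 1
  rw [← Finset.sum_neg_distrib]
  exact Finset.sum_congr rfl fun i _ => by rw [mul_comm]

set_option maxHeartbeats 2000000 in
/-- For a Lévy subordinator `D` (not identically zero) with inverse
`E t = inf {s ≥ 0 : D s > t}`, `λ₁,…,λₙ > 0` and `0 = s₀ ≤ s₁ ≤ ⋯ ≤ sₙ`,
`∫_{ℝⁿ≥0} exp(−Σᵢ λᵢ tᵢ) P[E tᵢ > sᵢ, i = 1,…,n] dt
  = (Πᵢ λᵢ)⁻¹ exp(−Σᵢ φ(λᵢ + ⋯ + λₙ)(sᵢ − sᵢ₋₁))`. -/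
theorem laplace_transform_tail_closed_form {Ω : Type*} [MeasurableSpace Ω]
    (P : Measure Ω) (D : ℝ → Ω → ℝ) (φ : ℝ → ℝ)
    (h : IsLevySubordinator P D φ)
    (hφ : ∀ lam : ℝ, 0 < lam → 0 < φ lam)
    (E : ℝ → Ω → ℝ) (hE : ∀ t ω, E t ω = sInf {u : ℝ | 0 ≤ u ∧ t < D u ω})
    (n : ℕ) (s : Fin (n + 1) → ℝ) (hs0 : s 0 = 0) (hmono : Monotone s)
    (lam : Fin n → ℝ) (hlam : ∀ i, 0 < lam i) :
    ∫ t in {t : Fin n → ℝ | ∀ i, 0 ≤ t i},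
        Real.exp (-∑ i, lam i * t i) *
          (P {ω | ∀ i : Fin n, s i.succ < E (t i) ω}).toReal
      = (∏ i, lam i)⁻¹ * Real.exp (-∑ i : Fin n,
          φ (∑ j ∈ Finset.Ici i, lam j) * (s i.succ - s i.castSucc)) := by
  classical
  haveI : IsProbabilityMeasure P := h.isProbability
  have hs_nonneg : ∀ i, 0 ≤ s i := fun i => hs0 ▸ hmono (Fin.zero_le i)
  set Q : Set (Fin n → ℝ) := {t : Fin n → ℝ | ∀ i, 0 ≤ t i} with hQdef
  have hQm : MeasurableSet Q := by
    have : Q = ⋂ i, {t : Fin n → ℝ | 0 ≤ t i} := by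
      ext t; simp only [hQdef, Set.mem_setOf_eq, Set.mem_iInter]
    rw [this]
    exact MeasurableSet.iInter fun i =>
      measurableSet_le measurable_const (measurable_pi_apply i)
  set e : (Fin n → ℝ) → ℝ := fun t => Real.exp (-∑ i, lam i * t i) with hedef
  have hemeas : Measurable e :=
    Real.measurable_exp.comp
      (Finset.measurable_sum _ fun i _ => by exact (measurable_pi_apply i : Measurable fun t : Fin n → ℝ => t i).const_mul (lam i)).neg
  have hepos : ∀ t, 0 < e t := fun t => Real.exp_pos _
  -- integrability of e on Q
  set g0 : Fin n → ℝ → ℝ :=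
    fun i => (Ici (0:ℝ)).indicator (fun u => Real.exp (-(lam i * u))) with hg0def
  have hg0int : ∀ i, Integrable (g0 i) := by
    intro i
    show Integrable ((Ici (0:ℝ)).indicator (fun u => Real.exp (-(lam i * u)))) volume
    refine (integrable_indicator_iff measurableSet_Ici).2 ?_
    have hres : volume.restrict (Ici (0:ℝ)) = volume.restrict (Ioi (0:ℝ)) :=
      Measure.restrict_congr_set Ioi_ae_eq_Ici.symm
    show Integrable _ (volume.restrict (Ici (0:ℝ)))
    rw [hres]
    simpa [neg_mul, IntegrableOn] using exp_neg_integrableOn_Ioi 0 (hlam i)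
  have heint : Integrable e (volume.restrict Q) := by
    have hq : Q.indicator e = fun t => ∏ i, g0 i (t i) := by
      funext t
      by_cases ht : t ∈ Q
      · rw [Set.indicator_of_mem ht]
        have hgi : ∀ i, g0 i (t i) = Real.exp (-(lam i * t i)) := fun i =>
          Set.indicator_of_mem (ht i) _
        rw [Finset.prod_congr rfl fun i _ => hgi i, ← Real.exp_sum]
        show Real.exp (-∑ i, lam i * t i) = _
        rw [← Finset.sum_neg_distrib]
      · rw [Set.indicator_of_notMem ht]
        obtain ⟨i, hi⟩ := not_forall.1 ht
        exact (Finset.prod_eq_zero (Finset.mem_univ i)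
          (Set.indicator_of_notMem hi _)).symm
    have hint2 : Integrable (Q.indicator e) volume := by
      rw [hq]; exact Integrable.fintype_prod (𝕜 := ℝ) hg0int
    exact (integrable_indicator_iff hQm).1 hint2
  -- the closed form value via the expectation identity
  have key := aux_key h n s hs0 hmono lam hlam
  set R : ℝ := (∏ i, lam i)⁻¹ * Real.exp (-∑ i : Fin n,
    φ (∑ j ∈ Finset.Ici i, lam j) * (s i.succ - s i.castSucc)) with hRdef
  -- measurability of the joint sets
  have hSm : ∀ SS : Set (ℝ × ℝ), MeasurableSet SS →
      MeasurableSet {p : (Fin n → ℝ) × Ω | ∀ i : Fin n, (D (s i.succ) p.2, p.1 i) ∈ SS} := by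
    intro SS hSSm
    have : {p : (Fin n → ℝ) × Ω | ∀ i : Fin n, (D (s i.succ) p.2, p.1 i) ∈ SS}
        = ⋂ i : Fin n, (fun p : (Fin n → ℝ) × Ω => (D (s i.succ) p.2, p.1 i)) ⁻¹' SS := by
      ext p; simp
    rw [this]
    exact MeasurableSet.iInter fun i =>
      (((h.measurable _).comp measurable_snd).prodMk
        ((measurable_pi_apply i).comp measurable_fst)) hSSm
  have hFmeas : ∀ SS : Set (ℝ × ℝ), MeasurableSet SS →
      Measurable (fun t : Fin n → ℝ =>
        (P {ω | ∀ i : Fin n, (D (s i.succ) ω, t i) ∈ SS}).toReal) := by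
    intro SS hSSm
    exact Measurable.ennreal_toReal (measurable_measure_prodMk_left (hSm SS hSSm))
  have hF1 : ∀ (SS : Set (ℝ × ℝ)) (t : Fin n → ℝ),
      (P {ω | ∀ i : Fin n, (D (s i.succ) ω, t i) ∈ SS}).toReal ≤ 1 := by
    intro SS t
    calc (P {ω | ∀ i : Fin n, (D (s i.succ) ω, t i) ∈ SS}).toReal
        ≤ (P univ).toReal := ENNReal.toReal_mono (measure_ne_top _ _) (measure_mono (subset_univ _))
      _ = 1 := by simp
  -- the main computation, for any relation squeezed between `<` and `≤`
  have main : ∀ SS : Set (ℝ × ℝ), MeasurableSet SS →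
      (∀ c u : ℝ, c < u → (c, u) ∈ SS) → (∀ c u : ℝ, (c, u) ∈ SS → c ≤ u) →
      ∫ t in Q, e t * (P {ω | ∀ i : Fin n, (D (s i.succ) ω, t i) ∈ SS}).toReal = R := by
    intro SS hSSm hSS1 hSS2
    set 𝒮 : Set ((Fin n → ℝ) × Ω) :=
      {p | ∀ i : Fin n, (D (s i.succ) p.2, p.1 i) ∈ SS} with h𝒮def
    have h𝒮m : MeasurableSet 𝒮 := hSm SS hSSm
    have hAm : ∀ t : Fin n → ℝ,
        MeasurableSet {ω | ∀ i : Fin n, (D (s i.succ) ω, t i) ∈ SS} :=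
      fun t => measurable_prodMk_left h𝒮m
    set H : (Fin n → ℝ) × Ω → ℝ := 𝒮.indicator (fun p => e p.1) with hHdef
    have hHmeas : Measurable H := (hemeas.comp measurable_fst).indicator h𝒮m
    have hHint : Integrable H ((volume.restrict Q).prod P) := by
      refine Integrable.mono' (heint.mul_prod (integrable_const 1))
        hHmeas.aestronglyMeasurable ?_
      refine Eventually.of_forall fun p => ?_
      show ‖H p‖ ≤ e p.1 * 1
      rw [mul_one]
      calc ‖H p‖ = ‖𝒮.indicator (fun p => e p.1) p‖ := rfl
        _ ≤ ‖e p.1‖ := norm_indicator_le_norm_self _ _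
        _ = e p.1 := by rw [Real.norm_eq_abs, abs_of_nonneg (hepos _).le]
    have hpt : ∀ t : Fin n → ℝ, ∫ ω, H (t, ω) ∂P
        = e t * (P {ω | ∀ i : Fin n, (D (s i.succ) ω, t i) ∈ SS}).toReal := by
      intro t
      have hfun : (fun ω => H (t, ω))
          = ({ω | ∀ i : Fin n, (D (s i.succ) ω, t i) ∈ SS}).indicator (fun _ => e t) := by
        funext ω
        by_cases hω : ω ∈ {ω | ∀ i : Fin n, (D (s i.succ) ω, t i) ∈ SS}
        · rw [Set.indicator_of_mem hω]
          exact Set.indicator_of_mem (show (t, ω) ∈ 𝒮 from hω) _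
        · rw [Set.indicator_of_notMem hω]
          exact Set.indicator_of_notMem (show (t, ω) ∉ 𝒮 from hω) _
      rw [hfun, integral_indicator_const _ (hAm t), smul_eq_mul, mul_comm, measureReal_def]
    have hinner : ∀ᵐ ω ∂P, (∫ t in Q, H (t, ω))
        = (∏ i, lam i)⁻¹ * Real.exp (-∑ i, lam i * D (s i.succ) ω) := by
      filter_upwards [h.nonneg] with ω hω
      set c : Fin n → ℝ := fun i => D (s i.succ) ω with hcdef
      have hc : ∀ i, 0 ≤ c i := fun i => hω _ (hs_nonneg _)
      set fI : Fin n → ℝ → ℝ := fun i => (Ici (0:ℝ)).indicator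
        (fun u => Real.exp (-(lam i * u)) * ({u : ℝ | (c i, u) ∈ SS}).indicator 1 u)
        with hfIdef
      have hsect : ∀ i, {u : ℝ | (c i, u) ∈ SS} = Ioi (c i)
          ∨ {u : ℝ | (c i, u) ∈ SS} = Ici (c i) := by
        intro i
        by_cases hcc : (c i, c i) ∈ SS
        · right; ext u
          constructor
          · exact fun hu => hSS2 _ _ hu
          · intro hu
            rcases eq_or_lt_of_le (show c i ≤ u from hu) with heq | hlt
            · rw [← heq]; exact hcc
            · exact hSS1 _ _ hlt
        · left; ext u
          constructor
          · intro hu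
            rcases eq_or_lt_of_le (hSS2 _ _ hu) with heq | hlt
            · exact absurd (show (c i, c i) ∈ SS from heq ▸ hu) hcc
            · exact hlt
          · exact fun hu => hSS1 _ _ hu
      have hIeq : Q.indicator (fun t => H (t, ω)) = fun t => ∏ i, fI i (t i) := by
        funext t
        by_cases ht : t ∈ Q
        · rw [Set.indicator_of_mem ht]
          by_cases hall : ∀ i, (c i, t i) ∈ SS
          · have hH : H (t, ω) = e t :=
              Set.indicator_of_mem (show (t, ω) ∈ 𝒮 from hall) _
            rw [hH]
            have hfi : ∀ i, fI i (t i) = Real.exp (-(lam i * t i)) := by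
              intro i
              have h1 : fI i (t i) = Real.exp (-(lam i * t i)) *
                  ({u : ℝ | (c i, u) ∈ SS}).indicator 1 (t i) :=
                Set.indicator_of_mem (ht i) _
              rw [h1, Set.indicator_of_mem
                (show t i ∈ {u : ℝ | (c i, u) ∈ SS} from hall i) 1]
              simp
            rw [Finset.prod_congr rfl fun i _ => hfi i, ← Real.exp_sum]
            show Real.exp (-∑ i, lam i * t i) = _
            rw [← Finset.sum_neg_distrib]
          · obtain ⟨i, hi⟩ := not_forall.1 hall
            have hH : H (t, ω) = 0 :=
              Set.indicator_of_notMem (show (t, ω) ∉ 𝒮 from hall) _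
            rw [hH]
            symm
            apply Finset.prod_eq_zero (Finset.mem_univ i)
            have h1 : fI i (t i) = Real.exp (-(lam i * t i)) *
                ({u : ℝ | (c i, u) ∈ SS}).indicator 1 (t i) :=
              Set.indicator_of_mem (ht i) _
            rw [h1, Set.indicator_of_notMem
              (show t i ∉ {u : ℝ | (c i, u) ∈ SS} from hi) 1]
            simp
        · rw [Set.indicator_of_notMem ht]
          obtain ⟨i, hi⟩ := not_forall.1 ht
          symm
          exact Finset.prod_eq_zero (Finset.mem_univ i) (Set.indicator_of_notMem hi _)
      have hIval : ∀ i, (∫ u, fI i u) = (lam i)⁻¹ * Real.exp (-(lam i * c i)) := by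
        intro i
        have hmul : ∀ (T : Set ℝ), (fun u => Real.exp (-(lam i * u)) * T.indicator 1 u)
            = T.indicator (fun u => Real.exp (-(lam i * u))) := by
          intro T
          funext u
          by_cases hu : u ∈ T
          · rw [Set.indicator_of_mem hu, Set.indicator_of_mem hu]; simp
          · rw [Set.indicator_of_notMem hu, Set.indicator_of_notMem hu]; simp
        rcases hsect i with hs' | hs'
        · show (∫ u, (Ici (0:ℝ)).indicator
              (fun u => Real.exp (-(lam i * u)) * ({u : ℝ | (c i, u) ∈ SS}).indicator 1 u) u) = _
          rw [hs', hmul (Ioi (c i)), Set.indicator_indicator,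
            Set.inter_eq_right.2 (show Ioi (c i) ⊆ Ici (0:ℝ) from
              fun u hu => le_trans (hc i) (le_of_lt hu)),
            integral_indicator measurableSet_Ioi]
          exact aux_integral_exp_Ioi (hlam i) (c i)
        · show (∫ u, (Ici (0:ℝ)).indicator
              (fun u => Real.exp (-(lam i * u)) * ({u : ℝ | (c i, u) ∈ SS}).indicator 1 u) u) = _
          rw [hs', hmul (Ici (c i)), Set.indicator_indicator,
            Set.inter_eq_right.2 (show Ici (c i) ⊆ Ici (0:ℝ) from
              fun u hu => le_trans (hc i) hu),
            integral_indicator measurableSet_Ici, integral_Ici_eq_integral_Ioi]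
          exact aux_integral_exp_Ioi (hlam i) (c i)
      calc ∫ t in Q, H (t, ω)
          = ∫ t, Q.indicator (fun t => H (t, ω)) t := (integral_indicator hQm).symm
        _ = ∫ t : Fin n → ℝ, ∏ i, fI i (t i) := by rw [hIeq]
        _ = ∏ i, ∫ u, fI i u := integral_fintype_prod_eq_prod fI
        _ = ∏ i, (lam i)⁻¹ * Real.exp (-(lam i * c i)) :=
            Finset.prod_congr rfl fun i _ => hIval i
        _ = (∏ i, lam i)⁻¹ * Real.exp (-∑ i, lam i * c i) := by
            rw [Finset.prod_mul_distrib, ← Finset.prod_inv_distrib, ← Real.exp_sum]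
            congr 1
            rw [← Finset.sum_neg_distrib]
    calc ∫ t in Q, e t * (P {ω | ∀ i : Fin n, (D (s i.succ) ω, t i) ∈ SS}).toReal
        = ∫ t in Q, ∫ ω, H (t, ω) ∂P :=
          integral_congr_ae (ae_of_all _ fun t => (hpt t).symm)
      _ = ∫ ω, (∫ t in Q, H (t, ω)) ∂P :=
          integral_integral_swap (f := fun t ω => H (t, ω)) hHint
      _ = ∫ ω, (∏ i, lam i)⁻¹ * Real.exp (-∑ i, lam i * D (s i.succ) ω) ∂P :=
          integral_congr_ae hinner
      _ = (∏ i, lam i)⁻¹ * ∫ ω, Real.exp (-∑ i, lam i * D (s i.succ) ω) ∂P :=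
          integral_const_mul _ _
      _ = R := by rw [key]
  -- instantiate with ≤ and <
  have hle := main {p : ℝ × ℝ | p.1 ≤ p.2} measurableSet_le' (fun c u hcu => le_of_lt hcu)
    (fun c u hcu => hcu)
  have hlt := main {p : ℝ × ℝ | p.1 < p.2} measurableSet_lt' (fun c u hcu => hcu)
    (fun c u hcu => le_of_lt hcu)
  -- sandwich with the inverse subordinator
  have growth := aux_growth h (hφ 1 one_pos)
  have hlower : ∀ t : Fin n → ℝ, ∀ᵐ ω ∂P,
      ω ∈ {ω | ∀ i : Fin n, (D (s i.succ) ω, t i) ∈ {p : ℝ × ℝ | p.1 < p.2}} →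
      ω ∈ {ω | ∀ i : Fin n, s i.succ < E (t i) ω} := by
    intro t
    filter_upwards [h.mono, h.rightCont, growth] with ω hmon hrc hgr hltm i
    have hlti : ∀ i : Fin n, D (s i.succ) ω < t i := hltm
    rw [hE]
    obtain ⟨u, hu0, hu⟩ := hgr (t i)
    have hne : Set.Nonempty {u : ℝ | 0 ≤ u ∧ t i < D u ω} := ⟨u, hu0, hu⟩
    have hcont := hrc (s i.succ) (hs_nonneg _)
    have hε : 0 < t i - D (s i.succ) ω := sub_pos.2 (hlti i)
    rw [Metric.continuousWithinAt_iff] at hcont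
    obtain ⟨δ, hδ, hδ'⟩ := hcont _ hε
    have hu₀mem : s i.succ + δ/2 ∈ Ici (s i.succ) := by
      simp only [mem_Ici]; linarith
    have hdist : dist (s i.succ + δ/2) (s i.succ) < δ := by
      rw [Real.dist_eq, abs_of_nonneg (by linarith)]
      linarith
    have hd0 := hδ' hu₀mem hdist
    rw [Real.dist_eq] at hd0
    have hDu₀ : D (s i.succ + δ/2) ω < t i := by
      have habs := abs_lt.1 hd0
      linarith [habs.2]
    have hlb : s i.succ + δ/2 ≤ sInf {u : ℝ | 0 ≤ u ∧ t i < D u ω} := by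
      apply le_csInf hne
      intro v hv
      by_contra hcv
      push_neg at hcv
      have hv0 : (0:ℝ) ≤ v := hv.1
      have hDv : D v ω ≤ D (s i.succ + δ/2) ω :=
        hmon hv0 (le_trans (hs_nonneg i.succ) (by linarith)) hcv.le
      linarith [hv.2]
    linarith
  have hupper : ∀ (t : Fin n → ℝ) (ω : Ω),
      ω ∈ {ω | ∀ i : Fin n, s i.succ < E (t i) ω} →
      ω ∈ {ω | ∀ i : Fin n, (D (s i.succ) ω, t i) ∈ {p : ℝ × ℝ | p.1 ≤ p.2}} := by
    intro t ω hω i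
    by_contra hcon
    have hlt' : t i < D (s i.succ) ω := lt_of_not_ge hcon
    have hmem : s i.succ ∈ {u : ℝ | 0 ≤ u ∧ t i < D u ω} := ⟨hs_nonneg _, hlt'⟩
    have hbdd : BddBelow {u : ℝ | 0 ≤ u ∧ t i < D u ω} := ⟨0, fun v hv => hv.1⟩
    have hinf := csInf_le hbdd hmem
    have hgt := hω i
    rw [hE] at hgt
    linarith
  -- integrability of the two comparison integrands
  have hIF : ∀ SS : Set (ℝ × ℝ), MeasurableSet SS →
      Integrable (fun t => e t *
        (P {ω | ∀ i : Fin n, (D (s i.succ) ω, t i) ∈ SS}).toReal) (volume.restrict Q) := by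
    intro SS hSSm
    refine Integrable.mono' heint
      ((hemeas.mul (hFmeas SS hSSm)).aestronglyMeasurable) ?_
    refine Eventually.of_forall fun t => ?_
    rw [Real.norm_eq_abs, abs_mul,
      abs_of_nonneg (hepos t).le, abs_of_nonneg ENNReal.toReal_nonneg]
    calc e t * (P {ω | ∀ i : Fin n, (D (s i.succ) ω, t i) ∈ SS}).toReal
        ≤ e t * 1 := mul_le_mul_of_nonneg_left (hF1 SS t) (hepos t).le
      _ = e t := mul_one _
  have hIle := hIF {p : ℝ × ℝ | p.1 ≤ p.2} measurableSet_le'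
  have hIlt := hIF {p : ℝ × ℝ | p.1 < p.2} measurableSet_lt'
  -- the difference integrates to zero, hence vanishes a.e.
  have hsub0 : ∫ t in Q,
      (e t * (P {ω | ∀ i : Fin n, (D (s i.succ) ω, t i) ∈ {p : ℝ × ℝ | p.1 ≤ p.2}}).toReal
        - e t * (P {ω | ∀ i : Fin n, (D (s i.succ) ω, t i) ∈ {p : ℝ × ℝ | p.1 < p.2}}).toReal)
      = 0 := by
    rw [integral_sub hIle hIlt, hle, hlt, sub_self]
  have hnn : ∀ t : Fin n → ℝ, 0 ≤
      e t * (P {ω | ∀ i : Fin n, (D (s i.succ) ω, t i) ∈ {p : ℝ × ℝ | p.1 ≤ p.2}}).toReal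
        - e t * (P {ω | ∀ i : Fin n, (D (s i.succ) ω, t i) ∈ {p : ℝ × ℝ | p.1 < p.2}}).toReal := by
    intro t
    have hmono' :
        (P {ω | ∀ i : Fin n, (D (s i.succ) ω, t i) ∈ {p : ℝ × ℝ | p.1 < p.2}}).toReal
          ≤ (P {ω | ∀ i : Fin n, (D (s i.succ) ω, t i) ∈ {p : ℝ × ℝ | p.1 ≤ p.2}}).toReal :=
      ENNReal.toReal_mono (measure_ne_top _ _)
        (measure_mono fun ω hω i => by
          have h' := le_of_lt (show D (s i.succ) ω < t i from hω i)
          exact h')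
    have := hepos t
    nlinarith
  have hzero := (integral_eq_zero_iff_of_nonneg hnn (hIle.sub hIlt)).1 hsub0
  -- conclude
  refine Eq.trans (integral_congr_ae ?_) hle
  filter_upwards [hzero, ae_restrict_of_ae (μ := volume) (s := Q) (Eventually.of_forall fun _ => trivial)] with t ht0 _
  have hFeq :
      (P {ω | ∀ i : Fin n, (D (s i.succ) ω, t i) ∈ {p : ℝ × ℝ | p.1 < p.2}}).toReal
        = (P {ω | ∀ i : Fin n, (D (s i.succ) ω, t i) ∈ {p : ℝ × ℝ | p.1 ≤ p.2}}).toReal := by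
    have hne := (hepos t).ne'
    have h0 : e t * ((P {ω | ∀ i : Fin n, (D (s i.succ) ω, t i) ∈ {p : ℝ × ℝ | p.1 ≤ p.2}}).toReal
      - (P {ω | ∀ i : Fin n, (D (s i.succ) ω, t i) ∈ {p : ℝ × ℝ | p.1 < p.2}}).toReal) = 0 := by
      rw [mul_sub]; exact ht0
    rcases mul_eq_zero.1 h0 with h' | h'
    · exact absurd h' hne
    · linarith [sub_eq_zero.1 h']
  have hg_le : (P {ω | ∀ i : Fin n, s i.succ < E (t i) ω}).toReal
      ≤ (P {ω | ∀ i : Fin n, (D (s i.succ) ω, t i) ∈ {p : ℝ × ℝ | p.1 ≤ p.2}}).toReal :=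
    ENNReal.toReal_mono (measure_ne_top _ _) (measure_mono fun ω hω => hupper t ω hω)
  have hg_ge : (P {ω | ∀ i : Fin n, (D (s i.succ) ω, t i) ∈ {p : ℝ × ℝ | p.1 < p.2}}).toReal
      ≤ (P {ω | ∀ i : Fin n, s i.succ < E (t i) ω}).toReal :=
    ENNReal.toReal_mono (measure_ne_top _ _) (measure_mono_ae (hlower t))
  have hgeq : (P {ω | ∀ i : Fin n, s i.succ < E (t i) ω}).toReal
      = (P {ω | ∀ i : Fin n, (D (s i.succ) ω, t i) ∈ {p : ℝ × ℝ | p.1 ≤ p.2}}).toReal :=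
    le_antisymm hg_le (by rw [← hFeq]; exact hg_ge)
  rw [hgeq]
  rfl
end

section
/- Let c ∈ ℝ and n ≥ 1, and let V : ℝⁿ≥0 → ℝ be a continuous function such that for every s = (s₁,…,sₙ) ∈ ℝⁿ≥0, the function τ ↦ V(s₁ + τ, …, sₙ + τ) is differentiable in τ ≥ 0 with derivative equal to −c · V(s₁ + τ, …, sₙ + τ), and such that V(s) = 0 whenever some coordinate sᵢ = 0. Then V is identically zero on ℝⁿ≥0. -/
open Set

/-- Let `c ∈ ℝ`, `n ≥ 1`, and let `V : ℝⁿ≥0 → ℝ` be continuous,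
such that for every `s` in the orthant the map `τ ↦ V (s + τ·(1,…,1))` is
differentiable for `τ ≥ 0` with derivative `−c · V (s + τ·(1,…,1))`, and `V`
vanishes whenever some coordinate is `0`.  Then `V ≡ 0` on the orthant. -/
theorem pde_uniqueness_characteristics (n : ℕ) (hn : 0 < n) (c : ℝ)
    (V : (Fin n → ℝ) → ℝ)
    (hcont : ContinuousOn V {s : Fin n → ℝ | ∀ i, 0 ≤ s i})
    (hderiv : ∀ s : Fin n → ℝ, (∀ i, 0 ≤ s i) → ∀ τ : ℝ, 0 ≤ τ →
      HasDerivWithinAt (fun u : ℝ => V (fun i => s i + u))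
        (-c * V (fun i => s i + τ)) (Ici 0) τ)
    (hbdry : ∀ s : Fin n → ℝ, (∀ i, 0 ≤ s i) → (∃ i, s i = 0) → V s = 0) :
    ∀ s : Fin n → ℝ, (∀ i, 0 ≤ s i) → V s = 0 := by
  intro s hs
  haveI : Nonempty (Fin n) := ⟨⟨0, hn⟩⟩
  obtain ⟨i₀, -, hmin⟩ := Finset.exists_min_image Finset.univ s ⟨Classical.arbitrary _, Finset.mem_univ _⟩
  set m : ℝ := s i₀ with hm
  have hm0 : 0 ≤ m := hs i₀
  set s' : Fin n → ℝ := fun i => s i - m with hs'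
  have hs'pos : ∀ i, 0 ≤ s' i := fun i => sub_nonneg.2 (hmin i (Finset.mem_univ i))
  set g : ℝ → ℝ := fun τ => V (fun i => s' i + τ) with hg
  have hg0 : g 0 = 0 := by
    apply hbdry
    · intro i; simpa using hs'pos i
    · exact ⟨i₀, by simp [hs', hm]⟩
  have hgderiv : ∀ τ ∈ Ico (0:ℝ) m, HasDerivWithinAt g (-c * g τ) (Ici τ) τ := by
    intro τ hτ
    exact (hderiv s' hs'pos τ hτ.1).mono (Ici_subset_Ici.2 hτ.1)
  -- h τ = exp (c τ) * g τ has zero right derivative on [0, m]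
  set h : ℝ → ℝ := fun τ => Real.exp (c * τ) * g τ with hh
  have hhderiv : ∀ τ ∈ Ico (0:ℝ) m, HasDerivWithinAt h 0 (Ici τ) τ := by
    intro τ hτ
    have he : HasDerivWithinAt (fun u : ℝ => Real.exp (c * u))
        (Real.exp (c * τ) * c) (Ici τ) τ := by
      have := ((Real.hasDerivAt_exp (c * τ)).comp τ
        ((hasDerivAt_id τ).const_mul c)).hasDerivWithinAt (s := Ici τ)
      simpa [mul_comm, Function.comp_def] using this
    have := he.mul (hgderiv τ hτ)
    have heq : Real.exp (c * τ) * c * g τ + Real.exp (c * τ) * (-c * g τ) = 0 := by ring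
    rw [← heq]
    exact this
  have hgcont : ContinuousOn g (Icc 0 m) := by
    intro τ hτ
    have : ContinuousWithinAt g (Ici 0) τ :=
      ((hderiv s' hs'pos τ hτ.1).continuousWithinAt)
    exact this.mono (fun x hx => hx.1)
  have hhcont : ContinuousOn h (Icc 0 m) :=
    (Real.continuous_exp.comp (continuous_const.mul continuous_id)).continuousOn.mul hgcont
  have hconst := constant_of_has_deriv_right_zero hhcont hhderiv m (right_mem_Icc.2 hm0)
  have hh0 : h 0 = 0 := by simp [hh, hg0]
  have : Real.exp (c * m) * g m = 0 := by rw [← hh0]; exact hconst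
  have hgm : g m = 0 := by
    rcases mul_eq_zero.1 this with h1 | h1
    · exact absurd h1 (Real.exp_ne_zero _)
    · exact h1
  have : V s = g m := by
    simp only [hg, hs']
    congr 1
    funext i
    ring
  rw [this, hgm]
end

section
/- Let D be a Lévy subordinator with Laplace exponent φ, not identically zero (so φ(x) > 0 for all x > 0, and D(s) → ∞ a.s.), and let E(t) = inf{ s ≥ 0 : D(s) > t } be its inverse. Then for every t ≥ 0 and every γ > 0, the moment 𝔼[E(t)^γ] is finite. -/
open Filter MeasureTheory ProbabilityTheory Set

set_option maxHeartbeats 1000000 in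
/-- For a Lévy subordinator `D` with Laplace exponent `φ` not
identically zero (`φ(x) > 0` for `x > 0`) and inverse `E t = inf {s ≥ 0 : D s > t}`,
all moments `𝔼[(E t)^γ]`, `γ > 0`, are finite. -/
theorem inverse_subordinator_moments_finite {Ω : Type*} [MeasurableSpace Ω]
    (P : Measure Ω) (D : ℝ → Ω → ℝ) (φ : ℝ → ℝ)
    (h : IsLevySubordinator P D φ)
    (hφ : ∀ lam : ℝ, 0 < lam → 0 < φ lam)
    (E : ℝ → Ω → ℝ) (hE : ∀ t ω, E t ω = sInf {u : ℝ | 0 ≤ u ∧ t < D u ω})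
    (t γ : ℝ) (ht : 0 ≤ t) (hγ : 0 < γ) :
    ∫⁻ ω, ENNReal.ofReal (E t ω ^ γ) ∂P < ⊤ := by
  classical
  haveI := h.isProbability
  set B : ℕ → Set Ω := fun n => {ω | D n ω ≤ t} with hB
  have hBmeas : ∀ n : ℕ, MeasurableSet (B n) := fun n =>
    (h.measurable n) measurableSet_Iic
  have hE_nonneg : ∀ ω, 0 ≤ E t ω := by
    intro ω; rw [hE]
    exact Real.sInf_nonneg fun x hx => hx.1
  have hE_le : ∀ (n : ℕ) (ω : Ω), t < D n ω → E t ω ≤ n := by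
    intro n ω hn
    rw [hE]
    exact csInf_le ⟨0, fun x hx => hx.1⟩ ⟨n.cast_nonneg, hn⟩
  set c : ℕ → ENNReal := fun n => ENNReal.ofReal (((n : ℝ) + 2) ^ γ) with hc
  have hbase : ∀ n : ℕ, (1 : ℝ) ≤ (n : ℝ) + 2 := by
    intro n; have : (0:ℝ) ≤ n := n.cast_nonneg; linarith
  have hone_le_c : ∀ n : ℕ, (1 : ENNReal) ≤ c n := by
    intro n
    rw [hc]
    refine ENNReal.one_le_ofReal.mpr ?_
    calc (1:ℝ) = ((n:ℝ) + 2) ^ (0:ℝ) := (Real.rpow_zero _).symm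
      _ ≤ ((n:ℝ) + 2) ^ γ := Real.rpow_le_rpow_of_exponent_le (hbase n) hγ.le
  set g : Ω → ENNReal := fun ω => 1 + ∑' n : ℕ, (B n).indicator (fun _ => c n) ω with hg
  -- pointwise bound
  have hpt : ∀ ω, ENNReal.ofReal (E t ω ^ γ) ≤ g ω := by
    intro ω
    by_cases hex : ∃ n : ℕ, t < D n ω
    · set n := Nat.find hex with hn
      have hDn : t < D n ω := Nat.find_spec hex
      cases' hnn : n with m
      · -- E t ω = 0
        have h0 : E t ω = 0 :=
          le_antisymm (by simpa using hE_le 0 ω (hnn ▸ hDn)) (hE_nonneg ω)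
        rw [h0, Real.zero_rpow hγ.ne']
        simp
      · -- D m ω ≤ t, so ω ∈ B m
        have hm : ¬ t < D m ω := by
          have := Nat.find_min hex (by omega : m < Nat.find hex)
          simpa [← hn, hnn] using this
        have hωB : ω ∈ B m := not_lt.1 hm
        have hEle : E t ω ≤ (m : ℝ) + 1 := by
          have := hE_le n ω hDn
          rw [hnn] at this
          push_cast at this ⊢
          linarith
        have h1 : ENNReal.ofReal (E t ω ^ γ) ≤ c m := by
          rw [hc]
          refine ENNReal.ofReal_le_ofReal ?_
          refine Real.rpow_le_rpow (hE_nonneg ω) (by linarith) hγ.le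
        refine h1.trans ?_
        have h2 : c m = (B m).indicator (fun _ => c m) ω := by
          rw [Set.indicator_of_mem hωB]
        rw [hg]
        calc c m = (B m).indicator (fun _ => c m) ω := h2
          _ ≤ ∑' n : ℕ, (B n).indicator (fun _ => c n) ω := ENNReal.le_tsum m
          _ ≤ 1 + ∑' n : ℕ, (B n).indicator (fun _ => c n) ω := le_add_self
    · -- all D n ω ≤ t : g ω = ⊤
      push_neg at hex
      have : (⊤ : ENNReal) ≤ g ω := by
        rw [hg]
        have : ∀ n : ℕ, (1 : ENNReal) ≤ (B n).indicator (fun _ => c n) ω := by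
          intro n
          have hmem : ω ∈ B n := hex n
          rw [Set.indicator_of_mem hmem]
          exact hone_le_c n
        calc (⊤ : ENNReal) = ∑' _ : ℕ, (1:ENNReal) :=
              (ENNReal.tsum_const_eq_top_of_ne_zero one_ne_zero).symm
          _ ≤ ∑' n : ℕ, (B n).indicator (fun _ => c n) ω := ENNReal.tsum_le_tsum this
          _ ≤ 1 + _ := le_add_self
      exact le_top.trans this
  -- integrability of exp(-(1 * D n))
  have hInt : ∀ n : ℕ, Integrable (fun ω => Real.exp (-(1 * D n ω))) P := by
    intro n
    by_contra hni
    have hl := h.laplace 1 n zero_le_one n.cast_nonneg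
    rw [integral_undef hni] at hl
    exact (Real.exp_pos _).ne' hl.symm
  -- Markov bound
  have hμB : ∀ n : ℕ, P (B n) ≤ ENNReal.ofReal (Real.exp (t - n * φ 1)) := by
    intro n
    have heq : (fun ω => Real.exp (t - D n ω))
        = fun ω => Real.exp t * Real.exp (-(1 * D n ω)) := by
      funext ω; rw [one_mul, ← Real.exp_add]; ring_nf
    have hInt' : Integrable (fun ω => Real.exp (t - D n ω)) P := by
      rw [heq]; exact (hInt n).const_mul _
    calc P (B n) = ∫⁻ ω, (B n).indicator 1 ω ∂P := (lintegral_indicator_one (hBmeas n)).symm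
      _ ≤ ∫⁻ ω, ENNReal.ofReal (Real.exp (t - D n ω)) ∂P := by
          refine lintegral_mono fun ω => ?_
          by_cases hω : ω ∈ B n
          · rw [Set.indicator_of_mem hω]
            exact ENNReal.one_le_ofReal.mpr (Real.one_le_exp (by
              have : D n ω ≤ t := hω; linarith))
          · rw [Set.indicator_of_notMem hω]; exact zero_le
      _ = ENNReal.ofReal (∫ ω, Real.exp (t - D n ω) ∂P) :=
          (ofReal_integral_eq_lintegral_ofReal hInt'
            (Filter.Eventually.of_forall fun ω => (Real.exp_pos _).le)).symm
      _ = ENNReal.ofReal (Real.exp (t - n * φ 1)) := by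
          rw [heq, integral_const_mul, h.laplace 1 n zero_le_one n.cast_nonneg,
            ← Real.exp_add]
          ring_nf
  -- summability of the real series
  set r : ℝ := Real.exp (-(φ 1)) with hr
  have hr0 : 0 < r := Real.exp_pos _
  have hr1 : r < 1 := by
    rw [hr]
    calc Real.exp (-(φ 1)) < Real.exp 0 :=
          Real.exp_lt_exp.mpr (neg_lt_zero.mpr (hφ 1 one_pos))
      _ = 1 := Real.exp_zero
  set K : ℕ := ⌈γ⌉₊ with hK
  have hsumK : Summable (fun n : ℕ => ((n : ℝ) + 2) ^ K * r ^ n) := by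
    have hF : Summable (fun n : ℕ => (n : ℝ) ^ K * r ^ n) :=
      summable_pow_mul_geometric_of_norm_lt_one K (by
        rw [Real.norm_eq_abs, abs_of_pos hr0]; exact hr1)
    have h2 : Summable (fun n : ℕ => ((n + 2 : ℕ) : ℝ) ^ K * r ^ (n + 2)) :=
      (summable_nat_add_iff 2).mpr hF
    have h3 := h2.mul_left ((r ^ 2)⁻¹)
    refine h3.congr fun n => ?_
    have hne : r ≠ 0 := hr0.ne'
    push_cast
    rw [pow_add]
    field_simp
  have hsum : Summable (fun n : ℕ => ((n : ℝ) + 2) ^ γ * Real.exp (t - n * φ 1)) := by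
    have key : ∀ n : ℕ, ((n : ℝ) + 2) ^ γ * Real.exp (t - n * φ 1)
        ≤ Real.exp t * (((n : ℝ) + 2) ^ K * r ^ n) := by
      intro n
      have hexp : Real.exp (t - n * φ 1) = Real.exp t * r ^ n := by
        rw [hr, ← Real.exp_nat_mul, ← Real.exp_add]
        ring_nf
      have hpow : ((n : ℝ) + 2) ^ γ ≤ ((n : ℝ) + 2) ^ (K : ℝ) :=
        Real.rpow_le_rpow_of_exponent_le (hbase n) (Nat.le_ceil γ)
      rw [hexp, Real.rpow_natCast] at *
      calc ((n : ℝ) + 2) ^ γ * (Real.exp t * r ^ n)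
          ≤ ((n : ℝ) + 2) ^ K * (Real.exp t * r ^ n) := by
            refine mul_le_mul_of_nonneg_right hpow (by positivity)
        _ = Real.exp t * (((n : ℝ) + 2) ^ K * r ^ n) := by ring
    refine Summable.of_nonneg_of_le (fun n => by positivity) key (hsumK.mul_left _)
  -- final calculation
  calc ∫⁻ ω, ENNReal.ofReal (E t ω ^ γ) ∂P
      ≤ ∫⁻ ω, g ω ∂P := lintegral_mono hpt
    _ = 1 + ∑' n : ℕ, c n * P (B n) := by
        rw [hg, lintegral_add_left measurable_const,
          lintegral_tsum (fun n => (measurable_const.indicator (hBmeas n)).aemeasurable)]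
        simp only [lintegral_indicator_const (hBmeas _)]
        simp [lintegral_one]
    _ ≤ 1 + ∑' n : ℕ, ENNReal.ofReal (((n : ℝ) + 2) ^ γ * Real.exp (t - n * φ 1)) := by
        refine add_le_add_right (ENNReal.tsum_le_tsum fun n => ?_) 1
        rw [ENNReal.ofReal_mul (by positivity)]
        exact mul_le_mul_right (hμB n) _
    _ = 1 + ENNReal.ofReal (∑' n : ℕ, ((n : ℝ) + 2) ^ γ * Real.exp (t - n * φ 1)) := by
        rw [ENNReal.ofReal_tsum_of_nonneg (fun n => by positivity) hsum]
    _ < ⊤ := by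
        refine ENNReal.add_lt_top.mpr ⟨ENNReal.one_lt_top, ENNReal.ofReal_lt_top⟩
end

section
/- Let D be a Lévy subordinator with Laplace exponent φ, not identically zero, and let E(t) = inf{ s ≥ 0 : D(s) > t } be its inverse. Then for every γ > 0 and every λ > 0: ∫₀^∞ e^{−λt} · 𝔼[E(t)^γ] dt = Γ(1 + γ) / (λ · φ(λ)^γ), where Γ is the Gamma function. In particular, for γ = 1, the function U(t) = 𝔼[E(t)] has Laplace transform ∫₀^∞ e^{−λt} U(t) dt = 1/(λ·φ(λ)). -/
open Filter MeasureTheory ProbabilityTheory Set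
open Real

lemma my_ae_prod_fst {α β : Type*} [MeasurableSpace α] [MeasurableSpace β] (μ : Measure α)
    (ν : Measure β) [SFinite μ] [SFinite ν] {p : α → Prop} (h : ∀ᵐ x ∂μ, p x) :
    ∀ᵐ z ∂(μ.prod ν), p z.1 := by
  rw [ae_iff] at h ⊢
  refine measure_mono_null (fun z hz => ?_)
    (show (μ.prod ν) ((toMeasurable μ {x | ¬ p x}) ×ˢ (univ : Set β)) = 0 by
      rw [Measure.prod_prod, measure_toMeasurable, h, zero_mul])
  exact ⟨subset_toMeasurable _ _ hz, trivial⟩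

lemma my_ae_prod_snd {α β : Type*} [MeasurableSpace α] [MeasurableSpace β] (μ : Measure α)
    (ν : Measure β) [SFinite μ] [SFinite ν] {p : β → Prop} (h : ∀ᵐ x ∂ν, p x) :
    ∀ᵐ z ∂(μ.prod ν), p z.2 := by
  rw [ae_iff] at h ⊢
  refine measure_mono_null (fun z hz => ?_)
    (show (μ.prod ν) ((univ : Set α) ×ˢ (toMeasurable ν {x | ¬ p x})) = 0 by
      rw [Measure.prod_prod, measure_toMeasurable, h, mul_zero])
  exact ⟨trivial, subset_toMeasurable _ _ hz⟩

lemma my_lint_exp_Ici {lam : ℝ} (hlam : 0 < lam) (d : ℝ) :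
    ∫⁻ t in Ici d, ENNReal.ofReal (Real.exp (-(lam * t)))
      = ENNReal.ofReal (Real.exp (-(lam * d)) / lam) := by
  rw [← ofReal_integral_eq_lintegral_ofReal]
  · congr 1
    rw [MeasureTheory.integral_Ici_eq_integral_Ioi]
    calc ∫ x in Ioi d, Real.exp (-(lam*x))
        = lam⁻¹ • ∫ x in Ioi (lam * d), Real.exp (-x) :=
          integral_comp_mul_left_Ioi (fun y => Real.exp (-y)) d hlam
      _ = Real.exp (-(lam * d)) / lam := by
          rw [integral_exp_neg_Ioi, smul_eq_mul]; ring
  · rw [show Integrable (fun t => Real.exp (-(lam * t))) (volume.restrict (Ici d)) = IntegrableOn (fun t => Real.exp (-(lam * t))) (Ici d) volume from rfl, integrableOn_Ici_iff_integrableOn_Ioi]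
    simpa [neg_mul] using exp_neg_integrableOn_Ioi d hlam
  · exact ae_of_all _ fun t => (Real.exp_pos _).le

lemma my_lint_rpow_Ioc {γ : ℝ} (hγ : 0 < γ) {e : ℝ} (he : 0 ≤ e) :
    ∫⁻ s in Ioc (0:ℝ) e, ENNReal.ofReal (γ * s ^ (γ - 1))
      = ENNReal.ofReal (e ^ γ) := by
  rw [← ofReal_integral_eq_lintegral_ofReal]
  · congr 1
    rw [integral_const_mul, ← intervalIntegral.integral_of_le he,
      integral_rpow (Or.inl (by linarith : (-1:ℝ) < γ - 1))]
    rw [sub_add_cancel, Real.zero_rpow hγ.ne', sub_zero]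
    field_simp
  · exact Integrable.const_mul
      ((intervalIntegrable_iff_integrableOn_Ioc_of_le he).1
        (intervalIntegral.intervalIntegrable_rpow' (by linarith))) _
  · filter_upwards [ae_restrict_mem measurableSet_Ioc] with s hs
    exact mul_nonneg hγ.le (Real.rpow_nonneg hs.1.le _)

lemma my_lint_gamma {γ lam b : ℝ} (hγ : 0 < γ) (hlam : 0 < lam) (hb : 0 < b) :
    ∫⁻ s in Ioi (0:ℝ), ENNReal.ofReal (γ * s ^ (γ - 1) * (Real.exp (-(s * b)) / lam))
      = ENNReal.ofReal (Real.Gamma (1 + γ) / (lam * b ^ γ)) := by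
  have hint : IntegrableOn (fun s : ℝ => γ * s ^ (γ - 1) * (Real.exp (-(s * b)) / lam))
      (Ioi 0) := by
    have h0 : IntegrableOn (fun s : ℝ => s ^ (γ - 1) * Real.exp (-b * s ^ (1:ℝ)))
        (Ioi 0) := integrableOn_rpow_mul_exp_neg_mul_rpow (by linarith) zero_lt_one hb
    have h1 : IntegrableOn (fun s : ℝ => (γ / lam) * (s ^ (γ - 1) * Real.exp (-b * s ^ (1:ℝ))))
        (Ioi 0) := h0.const_mul _
    refine h1.congr_fun (fun s _ => ?_) measurableSet_Ioi
    dsimp only; rw [Real.rpow_one, neg_mul, mul_comm b s]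
    ring
  rw [← ofReal_integral_eq_lintegral_ofReal hint]
  · congr 1
    have heq : ∀ s ∈ Ioi (0:ℝ), γ * s ^ (γ - 1) * (Real.exp (-(s * b)) / lam)
        = (γ / lam) * (s ^ (γ - 1) * Real.exp (-(b * s))) := by
      intro s _; rw [mul_comm s b]; ring
    rw [setIntegral_congr_fun measurableSet_Ioi heq, integral_const_mul,
      Real.integral_rpow_mul_exp_neg_mul_Ioi hγ hb]
    rw [add_comm, Real.Gamma_add_one hγ.ne', one_div, Real.inv_rpow hb.le]
    field_simp
  · filter_upwards [ae_restrict_mem measurableSet_Ioi] with s hs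
    have : (0:ℝ) ≤ s ^ (γ - 1) := Real.rpow_nonneg (le_of_lt hs) _
    positivity

set_option maxHeartbeats 1000000 in
theorem key_moment_laplace {Ω : Type*} [MeasurableSpace Ω]
    (P : Measure Ω) (D : ℝ → Ω → ℝ) (φ : ℝ → ℝ)
    (h : IsLevySubordinator P D φ)
    (hφ : ∀ lam : ℝ, 0 < lam → 0 < φ lam)
    (E : ℝ → Ω → ℝ) (hE : ∀ t ω, E t ω = sInf {u : ℝ | 0 ≤ u ∧ t < D u ω})
    (γ lam : ℝ) (hγ : 0 < γ) (hlam : 0 < lam) :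
    (∫ t in Ioi (0 : ℝ), Real.exp (-(lam * t)) * (∫ ω, E t ω ^ γ ∂P))
        = Real.Gamma (1 + γ) / (lam * φ lam ^ γ) := by
  haveI := h.isProbability
  -- integrability of the exponential
  have hDint : ∀ c s : ℝ, 0 ≤ c → 0 ≤ s →
      Integrable (fun ω => Real.exp (-(c * D s ω))) P := by
    intro c s hc hs
    have hm : Measurable fun ω => Real.exp (-(c * D s ω)) :=
      Real.measurable_exp.comp (((h.measurable s).const_mul c).neg)
    refine Integrable.mono' (integrable_const 1) hm.aestronglyMeasurable ?_
    filter_upwards [h.nonneg] with ω hω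
    rw [Real.norm_eq_abs, abs_of_pos (Real.exp_pos _)]
    exact Real.exp_le_one_iff.2 (neg_nonpos.2 (mul_nonneg hc (hω s hs)))
  have hlap : ∀ c s : ℝ, 0 ≤ c → 0 ≤ s →
      ∫⁻ ω, ENNReal.ofReal (Real.exp (-(c * D s ω))) ∂P
        = ENNReal.ofReal (Real.exp (-(s * φ c))) := by
    intro c s hc hs
    rw [← ofReal_integral_eq_lintegral_ofReal (hDint c s hc hs)
      (ae_of_all _ fun ω => (Real.exp_pos _).le), h.laplace c s hc hs]
  -- Step A: a.s. unboundedness of sample paths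
  have hS0 : ∀ n : ℕ, P {ω | ∀ k : ℕ, D (k:ℝ) ω ≤ (n:ℝ)} = 0 := by
    intro n
    set S := {ω | ∀ k : ℕ, D (k:ℝ) ω ≤ (n:ℝ)} with hSdef
    have hSm : MeasurableSet S := by
      have : S = ⋂ k : ℕ, {ω | D (k:ℝ) ω ≤ (n:ℝ)} := by
        ext ω; simp [hSdef, Set.mem_iInter]
      rw [this]
      exact MeasurableSet.iInter fun k => measurableSet_le (h.measurable _) measurable_const
    have hkey : ∀ m : ℕ, ENNReal.ofReal (Real.exp (-(n:ℝ))) * P S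
        ≤ ENNReal.ofReal (Real.exp (-((m:ℝ) * φ 1))) := by
      intro m
      calc ENNReal.ofReal (Real.exp (-(n:ℝ))) * P S
          = ∫⁻ _ in S, ENNReal.ofReal (Real.exp (-(n:ℝ))) ∂P := by
            rw [setLIntegral_const]
        _ ≤ ∫⁻ ω in S, ENNReal.ofReal (Real.exp (-(1 * D (m:ℝ) ω))) ∂P := by
            refine lintegral_mono_ae ((ae_restrict_iff' hSm).2 (ae_of_all _ fun ω hω => ?_))
            refine ENNReal.ofReal_le_ofReal (Real.exp_le_exp.2 (neg_le_neg ?_))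
            rw [one_mul]; exact hω m
        _ ≤ ∫⁻ ω, ENNReal.ofReal (Real.exp (-(1 * D (m:ℝ) ω))) ∂P :=
            setLIntegral_le_lintegral _ _
        _ = ENNReal.ofReal (Real.exp (-((m:ℝ) * φ 1))) :=
            hlap 1 m zero_le_one (Nat.cast_nonneg m)
    have hlim : Tendsto (fun m : ℕ => ENNReal.ofReal (Real.exp (-((m:ℝ) * φ 1)))) atTop (nhds 0) := by
      rw [← ENNReal.ofReal_zero]
      apply ENNReal.tendsto_ofReal
      apply Real.tendsto_exp_atBot.comp
      exact Filter.tendsto_neg_atTop_atBot.comp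
        ((tendsto_natCast_atTop_atTop (R := ℝ)).atTop_mul_const (hφ 1 one_pos))
    have h0 : ENNReal.ofReal (Real.exp (-(n:ℝ))) * P S ≤ 0 :=
      ge_of_tendsto hlim (Filter.Eventually.of_forall hkey)
    have h1 : ENNReal.ofReal (Real.exp (-(n:ℝ))) * P S = 0 := le_antisymm h0 zero_le
    rcases mul_eq_zero.1 h1 with h2 | h2
    · exact absurd h2 (by simp [Real.exp_pos])
    · exact h2
  have hunb : ∀ᵐ ω ∂P, ∀ n : ℕ, ∃ k : ℕ, (n:ℝ) < D (k:ℝ) ω := by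
    rw [ae_all_iff]
    intro n
    rw [ae_iff]
    convert hS0 n using 2
    ext ω
    simp [not_exists, not_lt]
  -- the good-ω set
  have hgood : ∀ᵐ ω ∂P, MonotoneOn (fun s => D s ω) (Ici 0)
      ∧ (∀ s, 0 ≤ s → 0 ≤ D s ω)
      ∧ (∀ s, 0 ≤ s → ContinuousWithinAt (fun u => D u ω) (Ici s) s)
      ∧ ∀ t : ℝ, ∃ u, 0 ≤ u ∧ t < D u ω := by
    filter_upwards [h.mono, h.nonneg, h.rightCont, hunb] with ω h1 h2 h3 h4
    refine ⟨h1, h2, h3, fun t => ?_⟩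
    obtain ⟨n, hn⟩ := exists_nat_ge t
    obtain ⟨k, hk⟩ := h4 n
    exact ⟨k, Nat.cast_nonneg k, lt_of_le_of_lt hn hk⟩
  -- the measurable modification of D via rational right limits, valued in ℝ≥0∞
  set F : ℝ × Ω → ENNReal := fun p =>
    ⨅ q : ℚ, if p.1 < (q:ℝ) then ENNReal.ofReal (D (q:ℝ) p.2) else ⊤ with hFdef
  have hF : Measurable F := by
    refine Measurable.iInf fun q => Measurable.ite ?_ ?_ measurable_const
    · exact measurableSet_lt measurable_fst measurable_const
    · exact ((h.measurable (q:ℝ)).comp measurable_snd).ennreal_ofReal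
  have hFval : ∀ ω, MonotoneOn (fun s => D s ω) (Ici 0)
      → (∀ s, 0 ≤ s → 0 ≤ D s ω)
      → (∀ s, 0 ≤ s → ContinuousWithinAt (fun u => D u ω) (Ici s) s)
      → ∀ s, 0 ≤ s → F (s, ω) = ENNReal.ofReal (D s ω) := by
    intro ω hmono hnn hrc s hs
    refine le_antisymm ?_ (le_iInf fun q => ?_)
    · refine ENNReal.le_of_forall_pos_le_add fun ε hε _ => ?_
      have hev : ∀ᶠ u in nhdsWithin s (Ici s), D u ω < D s ω + (ε:ℝ) :=
        (hrc s hs) (Iio_mem_nhds (lt_add_of_pos_right _ (by exact_mod_cast hε)))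
      obtain ⟨u, hu, hsub⟩ := mem_nhdsGE_iff_exists_Ico_subset.1 hev
      obtain ⟨q, hq1, hq2⟩ := exists_rat_btwn (mem_Ioi.1 hu)
      have hmem : (q:ℝ) ∈ Ico s u := ⟨hq1.le, hq2⟩
      have hlt : D (q:ℝ) ω < D s ω + (ε:ℝ) := hsub hmem
      calc F (s, ω) ≤ if s < (q:ℝ) then ENNReal.ofReal (D (q:ℝ) ω) else ⊤ := iInf_le _ q
        _ = ENNReal.ofReal (D (q:ℝ) ω) := if_pos hq1
        _ ≤ ENNReal.ofReal (D s ω + (ε:ℝ)) := ENNReal.ofReal_le_ofReal hlt.le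
        _ ≤ ENNReal.ofReal (D s ω) + ε := by
            rw [ENNReal.ofReal_add (hnn s hs) ε.coe_nonneg, ENNReal.ofReal_coe_nnreal]
    · by_cases hq : s < (q:ℝ)
      · rw [if_pos hq]
        exact ENNReal.ofReal_le_ofReal (hmono hs (le_trans hs hq.le) hq.le)
      · rw [if_neg hq]; exact le_top
  -- the kernel
  set Gker : ℝ × Ω × ℝ → ENNReal := fun z =>
    if F (z.2.2, z.2.1) ≤ ENNReal.ofReal z.1
      then ENNReal.ofReal (γ * z.2.2 ^ (γ - 1)) else 0 with hGkerdef
  have hGkerm : Measurable Gker := by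
    refine Measurable.ite ?_ ?_ measurable_const
    · exact measurableSet_le (hF.comp ((measurable_snd.snd).prodMk measurable_snd.fst))
        (measurable_fst.ennreal_ofReal)
    · exact ((measurable_snd.snd.pow measurable_const).const_mul γ).ennreal_ofReal
  -- Claim 1: the inner s-integral computes the γ-th power of the inverse process
  have hclaim1 : ∀ ω, (MonotoneOn (fun s => D s ω) (Ici 0)
      ∧ (∀ s, 0 ≤ s → 0 ≤ D s ω)
      ∧ (∀ s, 0 ≤ s → ContinuousWithinAt (fun u => D u ω) (Ici s) s)
      ∧ ∀ t : ℝ, ∃ u, 0 ≤ u ∧ t < D u ω) → ∀ t : ℝ, 0 < t →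
      (0 ≤ E t ω ∧ ∫⁻ s in Ioi (0:ℝ), Gker (t, ω, s) = ENNReal.ofReal (E t ω ^ γ)) := by
    rintro ω ⟨hmono, hnn, hrc, hub⟩ t ht
    set A := {u : ℝ | 0 ≤ u ∧ t < D u ω} with hAdef
    have hAne : A.Nonempty := by
      obtain ⟨u, hu1, hu2⟩ := hub t
      exact ⟨u, hu1, hu2⟩
    have hAbdd : BddBelow A := ⟨0, fun x hx => hx.1⟩
    have he : E t ω = sInf A := hE t ω
    have he0 : 0 ≤ E t ω := by
      rw [he]; exact le_csInf hAne fun x hx => hx.1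
    have hltE : ∀ s, 0 ≤ s → s < E t ω → D s ω ≤ t := by
      intro s hs0 hse
      by_contra hcon
      push_neg at hcon
      have h1 : sInf A ≤ s := csInf_le hAbdd ⟨hs0, hcon⟩
      rw [← he] at h1
      linarith
    have hgtE : ∀ s, E t ω < s → t < D s ω := by
      intro s hse
      rw [he] at hse
      obtain ⟨u, huA, hus⟩ := exists_lt_of_csInf_lt hAne hse
      exact lt_of_lt_of_le huA.2 (hmono huA.1 (le_trans huA.1 hus.le) hus.le)
    refine ⟨he0, ?_⟩
    have hSm : MeasurableSet {s : ℝ | F (s, ω) ≤ ENNReal.ofReal t} :=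
      measurableSet_le (hF.comp (measurable_id.prodMk measurable_const)) measurable_const
    have hDt : ∀ s : ℝ, 0 ≤ s → (F (s, ω) ≤ ENNReal.ofReal t ↔ D s ω ≤ t) := by
      intro s hs
      rw [hFval ω hmono hnn hrc s hs, ENNReal.ofReal_le_ofReal_iff ht.le]
    calc ∫⁻ s in Ioi (0:ℝ), Gker (t, ω, s)
        = ∫⁻ s in Ioi (0:ℝ), Set.indicator {s : ℝ | F (s, ω) ≤ ENNReal.ofReal t}
            (fun s => ENNReal.ofReal (γ * s ^ (γ - 1))) s := by
          refine lintegral_congr fun s => ?_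
          rw [Set.indicator_apply]
          rfl
      _ = ∫⁻ s in {s : ℝ | F (s, ω) ≤ ENNReal.ofReal t} ∩ Ioi (0:ℝ),
            ENNReal.ofReal (γ * s ^ (γ - 1)) := by
          rw [lintegral_indicator hSm, Measure.restrict_restrict hSm]
      _ = ∫⁻ s in Ioc (0:ℝ) (E t ω), ENNReal.ofReal (γ * s ^ (γ - 1)) := by
          refine setLIntegral_congr ?_
          rw [MeasureTheory.ae_eq_set]
          constructor
          · refine measure_mono_null (fun s hs => ?_) (measure_empty (μ := volume))
            obtain ⟨⟨hsS, hs0⟩, hnot⟩ := hs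
            have hD : D s ω ≤ t := (hDt s (le_of_lt hs0)).1 hsS
            have hse : s ≤ E t ω := by
              by_contra hcon
              push_neg at hcon
              exact absurd hD (not_le.2 (hgtE s hcon))
            exact absurd (⟨hs0, hse⟩ : s ∈ Ioc (0:ℝ) (E t ω)) hnot
          · refine measure_mono_null (fun s hs => ?_) (measure_singleton (E t ω))
            obtain ⟨⟨hs0, hse⟩, hnot⟩ := hs
            have : ¬ (s < E t ω) := by
              intro hcon
              exact hnot ⟨(hDt s (le_of_lt hs0)).2 (hltE s (le_of_lt hs0) hcon), hs0⟩
            have : s = E t ω := le_antisymm hse (not_lt.1 this)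
            exact this
      _ = ENNReal.ofReal (E t ω ^ γ) := my_lint_rpow_Ioc hγ he0
  set Φ : ℝ × Ω × ℝ → ENNReal := fun z =>
    ENNReal.ofReal (Real.exp (-(lam * z.1))) * Gker z with hΦdef
  have hΦm : Measurable Φ :=
    ((Real.measurable_exp.comp ((measurable_fst.const_mul lam).neg)).ennreal_ofReal).mul hGkerm
  set ψ : Ω × ℝ → ENNReal := fun p =>
    ENNReal.ofReal (γ * p.2 ^ (γ - 1)
      * (Real.exp (-(lam * (F (p.2, p.1)).toReal)) / lam)) with hψdef
  have hψm : Measurable ψ := by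
    refine Measurable.ennreal_ofReal (Measurable.mul ?_ (Measurable.div_const ?_ lam))
    · exact (measurable_snd.pow measurable_const).const_mul γ
    · exact Real.measurable_exp.comp
        (((hF.comp (measurable_snd.prodMk measurable_fst)).ennreal_toReal.const_mul lam).neg)
  -- the t-integral for a fixed good ω and s > 0
  have hIcid : ∀ d : ℝ, 0 ≤ d → (Ici d ∩ Ioi (0:ℝ) : Set ℝ) =ᵐ[volume] Ici d := by
    intro d hd
    rw [MeasureTheory.ae_eq_set]
    constructor
    · exact measure_mono_null (fun x hx => (hx.2 hx.1.1).elim) (measure_empty (μ := volume))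
    · refine measure_mono_null (fun x hx => ?_) (measure_singleton (0:ℝ))
      have hx0 : ¬ x ∈ Ioi (0:ℝ) := fun hcon => hx.2 ⟨hx.1, hcon⟩
      exact le_antisymm (not_lt.1 hx0) (le_trans hd hx.1)
  have htint : ∀ ω, (MonotoneOn (fun s => D s ω) (Ici 0)
      ∧ (∀ s, 0 ≤ s → 0 ≤ D s ω)
      ∧ (∀ s, 0 ≤ s → ContinuousWithinAt (fun u => D u ω) (Ici s) s)
      ∧ ∀ t : ℝ, ∃ u, 0 ≤ u ∧ t < D u ω) → ∀ s : ℝ, 0 < s →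
      ∫⁻ t in Ioi (0:ℝ), Φ (t, ω, s) = ψ (ω, s) := by
    rintro ω ⟨hmono, hnn, hrc, hub⟩ s hs
    have hd0 : 0 ≤ D s ω := hnn s hs.le
    have hFs : F (s, ω) = ENNReal.ofReal (D s ω) := hFval ω hmono hnn hrc s hs.le
    have hFt : (F (s, ω)).toReal = D s ω := by rw [hFs, ENNReal.toReal_ofReal hd0]
    calc ∫⁻ t in Ioi (0:ℝ), Φ (t, ω, s)
        = ∫⁻ t in Ioi (0:ℝ), Set.indicator (Ici (D s ω))
            (fun t => ENNReal.ofReal (Real.exp (-(lam * t)))) t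
            * ENNReal.ofReal (γ * s ^ (γ - 1)) := by
          refine setLIntegral_congr_fun measurableSet_Ioi (fun t ht => ?_)
          rw [Set.indicator_apply]
          simp only [Set.mem_Ici]
          by_cases hdt : D s ω ≤ t
          · have hcond : F (s, ω) ≤ ENNReal.ofReal t := by
              rw [hFs]; exact ENNReal.ofReal_le_ofReal hdt
            rw [if_pos hdt]
            simp only [hΦdef, hGkerdef, if_pos hcond]
          · have hcond : ¬ F (s, ω) ≤ ENNReal.ofReal t := by
              rw [hFs]
              intro hcon
              exact hdt ((ENNReal.ofReal_le_ofReal_iff (le_of_lt ht)).1 hcon)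
            rw [if_neg hdt]
            simp only [hΦdef, hGkerdef, if_neg hcond, mul_zero, zero_mul]
      _ = (∫⁻ t in Ioi (0:ℝ), Set.indicator (Ici (D s ω))
            (fun t => ENNReal.ofReal (Real.exp (-(lam * t)))) t)
            * ENNReal.ofReal (γ * s ^ (γ - 1)) := by
          refine lintegral_mul_const _ ?_
          exact (Measurable.indicator
            ((Real.measurable_exp.comp ((measurable_id.const_mul lam).neg)).ennreal_ofReal)
            measurableSet_Ici)
      _ = (∫⁻ t in Ici (D s ω) ∩ Ioi (0:ℝ), ENNReal.ofReal (Real.exp (-(lam * t))))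
            * ENNReal.ofReal (γ * s ^ (γ - 1)) := by
          rw [lintegral_indicator measurableSet_Ici, Measure.restrict_restrict measurableSet_Ici]
      _ = (∫⁻ t in Ici (D s ω), ENNReal.ofReal (Real.exp (-(lam * t))))
            * ENNReal.ofReal (γ * s ^ (γ - 1)) := by
          rw [setLIntegral_congr (hIcid _ hd0)]
      _ = ENNReal.ofReal (Real.exp (-(lam * D s ω)) / lam)
            * ENNReal.ofReal (γ * s ^ (γ - 1)) := by
          rw [my_lint_exp_Ici hlam]
      _ = ψ (ω, s) := by
          show _ = ENNReal.ofReal (γ * s ^ (γ - 1)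
            * (Real.exp (-(lam * (F (s, ω)).toReal)) / lam))
          rw [hFt, ← ENNReal.ofReal_mul (div_nonneg (Real.exp_pos _).le hlam.le)]
          congr 1
          ring
  -- the ω-integral for fixed s > 0
  have hωint : ∀ s : ℝ, 0 < s → ∫⁻ ω, ψ (ω, s) ∂P
      = ENNReal.ofReal (γ * s ^ (γ - 1) * (Real.exp (-(s * φ lam)) / lam)) := by
    intro s hs
    have hsnn : 0 ≤ γ * s ^ (γ - 1) := mul_nonneg hγ.le (Real.rpow_nonneg hs.le _)
    calc ∫⁻ ω, ψ (ω, s) ∂P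
        = ∫⁻ ω, ENNReal.ofReal (γ * s ^ (γ - 1) / lam)
            * ENNReal.ofReal (Real.exp (-(lam * (F (s, ω)).toReal))) ∂P := by
          refine lintegral_congr fun ω => ?_
          show ENNReal.ofReal (γ * s ^ (γ - 1)
            * (Real.exp (-(lam * (F (s, ω)).toReal)) / lam)) = _
          rw [show γ * s ^ (γ - 1) * (Real.exp (-(lam * (F (s, ω)).toReal)) / lam)
            = (γ * s ^ (γ - 1) / lam) * Real.exp (-(lam * (F (s, ω)).toReal)) by ring,
            ENNReal.ofReal_mul (div_nonneg hsnn hlam.le)]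
      _ = ENNReal.ofReal (γ * s ^ (γ - 1) / lam)
            * ∫⁻ ω, ENNReal.ofReal (Real.exp (-(lam * (F (s, ω)).toReal))) ∂P := by
          refine lintegral_const_mul _ ?_
          exact (Real.measurable_exp.comp
            (((hF.comp (measurable_const.prodMk measurable_id)).ennreal_toReal.const_mul
              lam).neg)).ennreal_ofReal
      _ = ENNReal.ofReal (γ * s ^ (γ - 1) / lam)
            * ∫⁻ ω, ENNReal.ofReal (Real.exp (-(lam * D s ω))) ∂P := by
          congr 1
          refine lintegral_congr_ae ?_
          filter_upwards [hgood] with ω hg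
          rw [hFval ω hg.1 hg.2.1 hg.2.2.1 s hs.le, ENNReal.toReal_ofReal (hg.2.1 s hs.le)]
      _ = ENNReal.ofReal (γ * s ^ (γ - 1) / lam) * ENNReal.ofReal (Real.exp (-(s * φ lam))) := by
          rw [hlap lam s hlam.le hs.le]
      _ = ENNReal.ofReal (γ * s ^ (γ - 1) * (Real.exp (-(s * φ lam)) / lam)) := by
          rw [← ENNReal.ofReal_mul (div_nonneg hsnn hlam.le)]
          congr 1
          ring
  -- assemble via Tonelli
  set ν : Measure ℝ := volume.restrict (Ioi (0:ℝ)) with hνdef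
  have hG2 : Measurable (fun q : ℝ × Ω => ∫⁻ s, Gker (q.1, q.2, s) ∂ν) :=
    Measurable.lintegral_prod_right' (f := fun r : (ℝ × Ω) × ℝ => Gker (r.1.1, r.1.2, r.2))
      (hGkerm.comp ((measurable_fst.fst).prodMk ((measurable_fst.snd).prodMk measurable_snd)))
  have hGbar : Measurable (fun t : ℝ => ∫⁻ ω, (∫⁻ s, Gker (t, ω, s) ∂ν) ∂P) :=
    Measurable.lintegral_prod_right' (f := fun q : ℝ × Ω => ∫⁻ s, Gker (q.1, q.2, s) ∂ν) hG2
  set H : ℝ → ENNReal := fun t => ENNReal.ofReal (Real.exp (-(lam * t)))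
    * ∫⁻ ω, (∫⁻ s, Gker (t, ω, s) ∂ν) ∂P with hHdef
  have hHm : Measurable H :=
    ((Real.measurable_exp.comp ((measurable_id.const_mul lam).neg)).ennreal_ofReal).mul hGbar
  have hJ : ∫⁻ t, H t ∂ν = ENNReal.ofReal (Real.Gamma (1 + γ) / (lam * φ lam ^ γ)) := by
    have hprodae := (my_ae_prod_fst P ν hgood).and
      (my_ae_prod_snd P ν (ae_restrict_mem measurableSet_Ioi))
    calc ∫⁻ t, H t ∂ν
        = ∫⁻ t, (∫⁻ p : Ω × ℝ, Φ (t, p) ∂(P.prod ν)) ∂ν := by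
          refine lintegral_congr fun t => ?_
          rw [lintegral_prod (fun p : Ω × ℝ => Φ (t, p))
            ((hΦm.comp (measurable_const.prodMk measurable_id)).aemeasurable)]
          have h1 : ∀ ω : Ω, ∫⁻ s, Φ (t, ω, s) ∂ν
              = ENNReal.ofReal (Real.exp (-(lam * t))) * ∫⁻ s, Gker (t, ω, s) ∂ν := by
            intro ω
            show ∫⁻ s, ENNReal.ofReal (Real.exp (-(lam * t))) * Gker (t, ω, s) ∂ν = _
            exact lintegral_const_mul _
              (show Measurable fun s : ℝ => Gker (t, ω, s) from
                hGkerm.comp (measurable_const.prodMk (measurable_const.prodMk measurable_id)))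
          simp_rw [h1]
          rw [lintegral_const_mul _
            (show Measurable fun ω : Ω => ∫⁻ s, Gker (t, ω, s) ∂ν from
              hG2.comp (measurable_const.prodMk measurable_id))]
      _ = ∫⁻ p : Ω × ℝ, (∫⁻ t, Φ (t, p) ∂ν) ∂(P.prod ν) := by
          exact lintegral_lintegral_swap
            ((hΦm.comp ((measurable_fst).prodMk measurable_snd)).aemeasurable)
      _ = ∫⁻ p : Ω × ℝ, ψ p ∂(P.prod ν) := by
          refine lintegral_congr_ae ?_
          filter_upwards [hprodae] with p hp
          exact htint p.1 hp.1 p.2 hp.2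
      _ = ∫⁻ s, (∫⁻ ω, ψ (ω, s) ∂P) ∂ν := lintegral_prod_symm _ hψm.aemeasurable
      _ = ∫⁻ s in Ioi (0:ℝ),
            ENNReal.ofReal (γ * s ^ (γ - 1) * (Real.exp (-(s * φ lam)) / lam)) := by
          refine setLIntegral_congr_fun measurableSet_Ioi (fun s hs => ?_)
          exact hωint s hs
      _ = ENNReal.ofReal (Real.Gamma (1 + γ) / (lam * φ lam ^ γ)) :=
          my_lint_gamma hγ hlam (hφ lam hlam)
  have hC0 : 0 ≤ Real.Gamma (1 + γ) / (lam * φ lam ^ γ) :=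
    div_nonneg (Real.Gamma_nonneg_of_nonneg (by linarith))
      (mul_nonneg hlam.le (Real.rpow_nonneg (hφ lam hlam).le _))
  have hper : ∀ t ∈ Ioi (0:ℝ), Real.exp (-(lam * t)) * (∫ ω, E t ω ^ γ ∂P) = (H t).toReal := by
    intro t ht
    have hGtm : Measurable fun ω => ∫⁻ s, Gker (t, ω, s) ∂ν :=
      Measurable.lintegral_prod_right' (f := fun r : Ω × ℝ => Gker (t, r.1, r.2))
        (hGkerm.comp (measurable_const.prodMk (measurable_fst.prodMk measurable_snd)))
    have hae1 : ∀ᵐ ω ∂P, (∫⁻ s, Gker (t, ω, s) ∂ν) = ENNReal.ofReal (E t ω ^ γ)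
        ∧ 0 ≤ E t ω := by
      filter_upwards [hgood] with ω hg
      obtain ⟨h0, h1⟩ := hclaim1 ω hg t ht
      exact ⟨h1, h0⟩
    have h2 : ∫ ω, E t ω ^ γ ∂P = ∫ ω, (∫⁻ s, Gker (t, ω, s) ∂ν).toReal ∂P := by
      refine integral_congr_ae ?_
      filter_upwards [hae1] with ω hω
      rw [hω.1, ENNReal.toReal_ofReal (Real.rpow_nonneg hω.2 _)]
    have h3 : ∫ ω, (∫⁻ s, Gker (t, ω, s) ∂ν).toReal ∂P
        = (∫⁻ ω, (∫⁻ s, Gker (t, ω, s) ∂ν) ∂P).toReal := by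
      refine integral_toReal hGtm.aemeasurable ?_
      filter_upwards [hae1] with ω hω
      rw [hω.1]
      exact ENNReal.ofReal_lt_top
    rw [h2, h3]
    simp only [hHdef]
    rw [ENNReal.toReal_mul, ENNReal.toReal_ofReal (Real.exp_pos _).le]
  calc ∫ t in Ioi (0:ℝ), Real.exp (-(lam * t)) * (∫ ω, E t ω ^ γ ∂P)
      = ∫ t in Ioi (0:ℝ), (H t).toReal := setIntegral_congr_fun measurableSet_Ioi hper
    _ = (∫⁻ t, H t ∂ν).toReal := by
        refine integral_toReal hHm.aemeasurable ?_
        exact ae_lt_top hHm (by rw [hJ]; exact ENNReal.ofReal_ne_top)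
    _ = Real.Gamma (1 + γ) / (lam * φ lam ^ γ) := by rw [hJ, ENNReal.toReal_ofReal hC0]

/-- For a Lévy subordinator `D` with Laplace exponent `φ` not
identically zero, and inverse `E t = inf {s ≥ 0 : D s > t}`: for `γ, λ > 0`,
`∫₀^∞ e^{−λt} 𝔼[(E t)^γ] dt = Γ(1+γ)/(λ φ(λ)^γ)`; in particular, for
`U t = 𝔼[E t]`, `∫₀^∞ e^{−λt} U(t) dt = 1/(λ φ(λ))`. -/
theorem inverse_subordinator_moment_laplace {Ω : Type*} [MeasurableSpace Ω]
    (P : Measure Ω) (D : ℝ → Ω → ℝ) (φ : ℝ → ℝ)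
    (h : IsLevySubordinator P D φ)
    (hφ : ∀ lam : ℝ, 0 < lam → 0 < φ lam)
    (E : ℝ → Ω → ℝ) (hE : ∀ t ω, E t ω = sInf {u : ℝ | 0 ≤ u ∧ t < D u ω})
    (γ lam : ℝ) (hγ : 0 < γ) (hlam : 0 < lam) :
    (∫ t in Ioi (0 : ℝ), Real.exp (-(lam * t)) * (∫ ω, E t ω ^ γ ∂P))
        = Real.Gamma (1 + γ) / (lam * φ lam ^ γ) ∧
    (∫ t in Ioi (0 : ℝ), Real.exp (-(lam * t)) * (∫ ω, E t ω ∂P))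
        = 1 / (lam * φ lam) := by
  refine ⟨key_moment_laplace P D φ h hφ E hE γ lam hγ hlam, ?_⟩
  have h1 := key_moment_laplace P D φ h hφ E hE 1 lam one_pos hlam
  simp only [Real.rpow_one] at h1
  rw [show (1:ℝ) + 1 = 2 by norm_num, Real.Gamma_two] at h1
  exact h1
end

section
/- Let D be a Lévy subordinator with Laplace exponent φ, and suppose 0 < 𝔼[D(1)] < ∞. Let E(t) = inf{ s ≥ 0 : D(s) > t } be the inverse subordinator and U(t) = 𝔼[E(t)]. Then U(t)/t → 1/𝔼[D(1)] as t → ∞ (the renewal theorem: U(t) ∼ t/𝔼[D(1)]). -/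
open Filter MeasureTheory ProbabilityTheory Set
open scoped ENNReal NNReal Topology

/-! ### Auxiliary lemmas -/

private lemma aux_nat_cast_eq_tsum (n : ℕ) :
    (n : ℝ≥0∞) = ∑' k : ℕ, (if k < n then 1 else 0) := by
  rw [tsum_eq_sum (s := Finset.range n) (by intro k hk; simp [Finset.mem_range] at hk; simp [hk])]
  simp [Finset.filter_true_of_mem]

private lemma aux_lintegral_nat_eq {Ω : Type*} [MeasurableSpace Ω] (μ : Measure Ω)
    (f : Ω → ℕ) (hf : Measurable f) :
    ∫⁻ ω, (f ω : ℝ≥0∞) ∂μ = ∑' k : ℕ, μ {ω | k < f ω} := by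
  have hms : ∀ k : ℕ, MeasurableSet {ω | k < f ω} :=
    fun k => measurableSet_lt measurable_const hf
  have : ∀ ω, (f ω : ℝ≥0∞) = ∑' k : ℕ, Set.indicator {ω' | k < f ω'} (1 : Ω → ℝ≥0∞) ω := by
    intro ω
    rw [aux_nat_cast_eq_tsum]
    congr 1; ext k
    by_cases hk : k < f ω <;> simp [Set.indicator, hk]
  calc ∫⁻ ω, (f ω : ℝ≥0∞) ∂μ
      = ∫⁻ ω, ∑' k : ℕ, Set.indicator {ω' | k < f ω'} (1 : Ω → ℝ≥0∞) ω ∂μ := by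
        exact lintegral_congr this
    _ = ∑' k : ℕ, ∫⁻ ω, Set.indicator {ω' | k < f ω'} (1 : Ω → ℝ≥0∞) ω ∂μ :=
        lintegral_tsum (fun k => (measurable_one.indicator (hms k)).aemeasurable)
    _ = ∑' k : ℕ, μ {ω | k < f ω} := by
        congr 1; ext k
        rw [lintegral_indicator_one (hms k)]

private lemma aux_partial_bound (y : ℕ → ℝ) (hy : ∀ k, 0 ≤ y k) (b t : ℝ) (hb : ∀ k, y k ≤ b)
    (ht : 0 ≤ t) :
    ∑' k : ℕ, ENNReal.ofReal (y k) *
      (if ∑ j ∈ Finset.range k, y j ≤ t then (1:ℝ≥0∞) else 0) ≤ ENNReal.ofReal (t + b) := by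
  have hb0 : (0:ℝ) ≤ b := le_trans (hy 0) (hb 0)
  set T : ℕ → ℝ := fun k => ∑ j ∈ Finset.range k, y j with hT
  have hTmono : Monotone T := by
    intro i j hij
    exact Finset.sum_le_sum_of_subset_of_nonneg (Finset.range_mono hij) (fun k _ _ => hy k)
  have hsum_range : ∀ M : ℕ, ∑ k ∈ Finset.range M, ENNReal.ofReal (y k) = ENNReal.ofReal (T M) := by
    intro M
    rw [hT, ENNReal.ofReal_sum_of_nonneg (fun i _ => hy i)]
  have hTle : ∀ M : ℕ, (∀ j < M, T j ≤ t) → ENNReal.ofReal (T M) ≤ ENNReal.ofReal (t + b) := by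
    intro M hM
    rcases Nat.eq_zero_or_pos M with hM0 | hM0
    · subst hM0
      simp only [hT, Finset.range_zero, Finset.sum_empty]
      exact ENNReal.ofReal_le_ofReal (by linarith)
    · have hM1 : M = (M-1) + 1 := by omega
      have hstep : T M = T (M-1) + y (M-1) := by
        conv_lhs => rw [hM1]
        exact Finset.sum_range_succ y (M-1)
      rw [hstep]
      exact ENNReal.ofReal_le_ofReal (by
        have h1 := hM (M-1) (by omega); have h2 := hb (M-1); linarith)
  rw [ENNReal.tsum_eq_iSup_sum]
  refine iSup_le (fun s => ?_)
  obtain ⟨n, hn⟩ := s.exists_nat_subset_range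
  have hsub : ∑ k ∈ s, ENNReal.ofReal (y k) * (if T k ≤ t then (1:ℝ≥0∞) else 0)
      ≤ ∑ k ∈ Finset.range n, ENNReal.ofReal (y k) * (if T k ≤ t then (1:ℝ≥0∞) else 0) :=
    Finset.sum_le_sum_of_subset hn
  refine hsub.trans ?_
  by_cases hex : ∃ k, t < T k
  · set N := Nat.find hex with hN
    have hNmem : t < T N := Nat.find_spec hex
    have hNmin : ∀ j < N, T j ≤ t := fun j hj => le_of_not_gt (Nat.find_min hex hj)
    have hind : ∀ k, (if T k ≤ t then (1:ℝ≥0∞) else 0) = (if k < N then 1 else 0) := by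
      intro k
      by_cases hk : k < N
      · rw [if_pos (hNmin k hk), if_pos hk]
      · push_neg at hk
        rw [if_neg (by
          have := hTmono hk
          push_neg; linarith), if_neg (by omega)]
    simp_rw [hind]
    have heq : ∑ k ∈ Finset.range n, ENNReal.ofReal (y k) * (if k < N then (1:ℝ≥0∞) else 0)
        = ∑ k ∈ Finset.range (min n N), ENNReal.ofReal (y k) := by
      simp_rw [mul_ite, mul_one, mul_zero]
      rw [← Finset.sum_filter]
      congr 1
      ext k
      simp only [Finset.mem_filter, Finset.mem_range, lt_min_iff]
    rw [heq, hsum_range]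
    exact hTle (min n N) (fun j hj => hNmin j (by omega))
  · push_neg at hex
    have : ∀ k, (if T k ≤ t then (1:ℝ≥0∞) else 0) = 1 := fun k => if_pos (hex k)
    simp_rw [this, mul_one, hsum_range]
    exact hTle n (fun j _ => hex j)

private lemma aux_wald_bound {Ω : Type*} [MeasurableSpace Ω] (P : Measure Ω)
    [IsProbabilityMeasure P]
    (X : ℕ → Ω → ℝ) (hXm : ∀ i, Measurable (X i))
    (hindep : ∀ n : ℕ, iIndepFun (fun i : Fin n => X (i:ℕ)) P)
    (hmap : ∀ i, P.map (X i) = P.map (X 0))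
    (b : ℕ) (t : ℝ) (ht : 0 ≤ t) :
    (∫⁻ ω, ENNReal.ofReal (min (b:ℝ) (max 0 (X 0 ω))) ∂P) *
      ∑' k : ℕ, P {ω | ∑ j ∈ Finset.range k, min (b:ℝ) (max 0 (X j ω)) ≤ t}
      ≤ ENNReal.ofReal (t + b) := by
  classical
  set g : ℝ → ℝ := fun x => min (b:ℝ) (max 0 x) with hg
  have hgm : Measurable g := (measurable_const.min (measurable_const.max measurable_id))
  set Y : ℕ → Ω → ℝ := fun i ω => g (X i ω) with hY
  have hYm : ∀ i, Measurable (Y i) := fun i => hgm.comp (hXm i)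
  have hY0 : ∀ i ω, 0 ≤ Y i ω := fun i ω => le_min (Nat.cast_nonneg b) (le_max_left _ _)
  have hYb : ∀ i ω, Y i ω ≤ b := fun i ω => min_le_left _ _
  set A : ℕ → Set Ω := fun k => {ω | ∑ j ∈ Finset.range k, Y j ω ≤ t} with hA
  have hAm : ∀ k, MeasurableSet (A k) :=
    fun k => measurableSet_le (Finset.measurable_sum _ (fun j _ => hYm j)) measurable_const
  set mb : ℝ≥0∞ := ∫⁻ ω, ENNReal.ofReal (Y 0 ω) ∂P with hmb
  have hmbk : ∀ k, ∫⁻ ω, ENNReal.ofReal (Y k ω) ∂P = mb := by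
    intro k
    have h1 : ∫⁻ ω, ENNReal.ofReal (Y k ω) ∂P
        = ∫⁻ x, ENNReal.ofReal (g x) ∂(P.map (X k)) := by
      exact (lintegral_map (f := fun x => ENNReal.ofReal (g x))
        (ENNReal.measurable_ofReal.comp hgm) (hXm k)).symm
    have h2 : ∫⁻ ω, ENNReal.ofReal (Y 0 ω) ∂P
        = ∫⁻ x, ENNReal.ofReal (g x) ∂(P.map (X 0)) := by
      exact (lintegral_map (f := fun x => ENNReal.ofReal (g x))
        (ENNReal.measurable_ofReal.comp hgm) (hXm 0)).symm
    rw [hmb, h1, h2, hmap k]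
  have hindepk : ∀ k : ℕ, IndepFun (fun ω => ENNReal.ofReal (Y k ω))
      (fun ω => if ω ∈ A k then (1:ℝ≥0∞) else 0) P := by
    intro k
    have J := hindep (k+1)
    set S : Finset (Fin (k+1)) := {Fin.last k} with hS
    set T : Finset (Fin (k+1)) := Finset.univ.filter (fun i => (i:ℕ) < k) with hTd
    have hdisj : Disjoint S T := by
      simp only [hS, hTd, Finset.disjoint_singleton_left, Finset.mem_filter]
      simp [Fin.last]
    have base := J.indepFun_finset S T hdisj (fun i => hXm i)
    set φ : ({x // x ∈ S} → ℝ) → ℝ≥0∞ :=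
      fun v => ENNReal.ofReal (g (v ⟨Fin.last k, Finset.mem_singleton_self _⟩)) with hφ
    have hφm : Measurable φ :=
      ENNReal.measurable_ofReal.comp (hgm.comp (measurable_pi_apply _))
    set ψ : ({x // x ∈ T} → ℝ) → ℝ≥0∞ :=
      fun v => if (∑ i : {x // x ∈ T}, g (v i)) ≤ t then (1:ℝ≥0∞) else 0 with hψ
    have hψm : Measurable ψ := by
      have hset : MeasurableSet {v : {x // x ∈ T} → ℝ | (∑ i : {x // x ∈ T}, g (v i)) ≤ t} :=
        measurableSet_le (Finset.measurable_sum _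
          (fun i _ => hgm.comp (measurable_pi_apply _))) measurable_const
      exact Measurable.ite hset measurable_const measurable_const
    have hcomp := base.comp hφm hψm
    have e1 : (φ ∘ fun a (i : {x // x ∈ S}) => X ((i:Fin (k+1)):ℕ) a)
        = fun ω => ENNReal.ofReal (Y k ω) := by
      funext ω
      rfl
    have e2 : (ψ ∘ fun a (i : {x // x ∈ T}) => X ((i:Fin (k+1)):ℕ) a)
        = fun ω => if ω ∈ A k then (1:ℝ≥0∞) else 0 := by
      funext ω
      simp only [Function.comp_apply, hψ, hA, Set.mem_setOf_eq]
      congr 1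
      have : (∑ i : {x // x ∈ T}, g (X ((i:Fin (k+1)):ℕ) ω)) =
          ∑ j ∈ Finset.range k, Y j ω := by
        rw [Finset.sum_coe_sort T (fun i => g (X ((i:Fin (k+1)):ℕ) ω))]
        rw [hTd, Finset.sum_filter]
        rw [Fin.sum_univ_eq_sum_range (fun j => if j < k then g (X j ω) else 0) (k+1)]
        rw [← Finset.sum_filter]
        congr 1
        · ext j
          simp only [Finset.mem_filter, Finset.mem_range]
          omega
      rw [this]
    rw [e1, e2] at hcomp
    exact hcomp
  have hperk : ∀ k : ℕ, ∫⁻ ω, ENNReal.ofReal (Y k ω) * (if ω ∈ A k then (1:ℝ≥0∞) else 0) ∂P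
      = mb * P (A k) := by
    intro k
    have := lintegral_mul_eq_lintegral_mul_lintegral_of_indepFun
      (μ := P) (f := fun ω => ENNReal.ofReal (Y k ω))
      (g := fun ω => if ω ∈ A k then (1:ℝ≥0∞) else 0)
      (ENNReal.measurable_ofReal.comp (hYm k))
      (Measurable.ite (hAm k) measurable_const measurable_const)
      (hindepk k)
    simp only [Pi.mul_apply] at this
    rw [this, hmbk k]
    congr 1
    have : (fun ω => if ω ∈ A k then (1:ℝ≥0∞) else 0) = (A k).indicator (1 : Ω → ℝ≥0∞) := by
      funext ω; by_cases hω : ω ∈ A k <;> simp [Set.indicator, hω]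
    rw [this, lintegral_indicator_one (hAm k)]
  calc mb * ∑' k : ℕ, P (A k)
      = ∑' k : ℕ, mb * P (A k) := ENNReal.tsum_mul_left.symm
    _ = ∑' k : ℕ, ∫⁻ ω, ENNReal.ofReal (Y k ω) * (if ω ∈ A k then (1:ℝ≥0∞) else 0) ∂P := by
        simp_rw [hperk]
    _ = ∫⁻ ω, ∑' k : ℕ, ENNReal.ofReal (Y k ω) * (if ω ∈ A k then (1:ℝ≥0∞) else 0) ∂P := by
        exact (lintegral_tsum
          (f := fun k ω => ENNReal.ofReal (Y k ω) * (if ω ∈ A k then (1:ℝ≥0∞) else 0))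
          (fun k => ((ENNReal.measurable_ofReal.comp (hYm k)).mul
          (Measurable.ite (hAm k) measurable_const measurable_const)).aemeasurable)).symm
    _ ≤ ∫⁻ _, ENNReal.ofReal (t + b) ∂P := by
        refine lintegral_mono (fun ω => ?_)
        have := aux_partial_bound (fun j => Y j ω) (fun j => hY0 j ω) b t (fun j => hYb j ω) ht
        refine le_trans (le_of_eq ?_) this
        congr 1
    _ = ENNReal.ofReal (t + b) := by simp

private lemma aux_nu_asymp (f : ℕ → ℝ) (m : ℝ) (hm : 0 < m) (hmono : Monotone f)
    (hlim : Tendsto (fun n : ℕ => f n / n) atTop (𝓝 m)) :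
    Tendsto (fun t : ℝ => ((sInf {n : ℕ | t < f n} : ℕ) : ℝ) / t) atTop (𝓝 m⁻¹) := by
  set ν : ℝ → ℕ := fun t => sInf {n : ℕ | t < f n} with hν
  have hf_top : Tendsto f atTop atTop := by
    have h1 : Tendsto (fun n : ℕ => (f n / n) * n) atTop atTop :=
      Tendsto.pos_mul_atTop hm hlim tendsto_natCast_atTop_atTop
    refine Tendsto.congr' ?_ h1
    filter_upwards [eventually_ge_atTop 1] with n hn
    field_simp [Nat.cast_ne_zero.mpr (by omega : n ≠ 0)]
  have hne : ∀ t : ℝ, {n : ℕ | t < f n}.Nonempty := by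
    intro t
    rcases (hf_top.eventually (eventually_gt_atTop t)).exists with ⟨n, hn⟩
    exact ⟨n, hn⟩
  have hmem : ∀ t, t < f (ν t) := fun t => Nat.sInf_mem (hne t)
  have hnotmem : ∀ t, ∀ j < ν t, f j ≤ t := by
    intro t j hj
    by_contra hc
    push_neg at hc
    have h1 : ν t ≤ j := Nat.sInf_le hc
    omega
  have hν_top : Tendsto (fun t => ν t) atTop atTop := by
    rw [tendsto_atTop_atTop]
    intro k
    refine ⟨f k, fun t ht => ?_⟩
    by_contra hc
    push_neg at hc
    have : f (ν t) ≤ f k := hmono (by omega)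
    exact absurd (hmem t) (by linarith)
  have hup : Tendsto (fun t => f (ν t) / (ν t : ℝ)) atTop (𝓝 m) :=
    hlim.comp hν_top
  have hlow0 : Tendsto (fun n : ℕ => f n / ((n : ℝ) + 1)) atTop (𝓝 m) := by
    have h2 : Tendsto (fun n : ℕ => (n : ℝ) / ((n : ℝ) + 1)) atTop (𝓝 1) := by
      have := tendsto_natCast_div_add_atTop (𝕜 := ℝ) 1
      simpa using this
    have := hlim.mul h2
    rw [mul_one] at this
    refine Tendsto.congr' ?_ this
    filter_upwards [eventually_ge_atTop 1] with n hn
    have : (n:ℝ) ≠ 0 := Nat.cast_ne_zero.mpr (by omega)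
    field_simp
  have hν1 : ∀ᶠ t in atTop, 1 ≤ ν t := hν_top.eventually (eventually_ge_atTop 1)
  have hlow : Tendsto (fun t => f (ν t - 1) / (ν t : ℝ)) atTop (𝓝 m) := by
    have hcomp : Tendsto (fun t => ν t - 1) atTop atTop := by
      rw [tendsto_atTop_atTop]
      intro k
      rcases (tendsto_atTop_atTop.mp hν_top) (k+1) with ⟨T, hT⟩
      exact ⟨T, fun t ht => by have := hT t ht; omega⟩
    have := hlow0.comp hcomp
    refine Tendsto.congr' ?_ this
    filter_upwards [hν1] with t ht
    have : ((ν t - 1 : ℕ) : ℝ) + 1 = (ν t : ℝ) := by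
      push_cast [Nat.cast_sub ht]; ring
    simp [Function.comp, this]
  have hsq : Tendsto (fun t => t / (ν t : ℝ)) atTop (𝓝 m) := by
    refine tendsto_of_tendsto_of_tendsto_of_le_of_le' hlow hup ?_ ?_
    · filter_upwards [hν1] with t ht
      have h1 : f (ν t - 1) ≤ t := hnotmem t (ν t - 1) (by omega)
      have h2 : (0:ℝ) < (ν t : ℝ) := by exact_mod_cast (by omega : 0 < ν t)
      exact div_le_div_of_nonneg_right h1 (le_of_lt h2)
    · filter_upwards [hν1] with t ht
      have h2 : (0:ℝ) < (ν t : ℝ) := by exact_mod_cast (by omega : 0 < ν t)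
      have := le_of_lt (hmem t)
      gcongr
  have hfin : Tendsto (fun t => (t / (ν t : ℝ))⁻¹) atTop (𝓝 m⁻¹) :=
    hsq.inv₀ (ne_of_gt hm)
  refine Tendsto.congr' ?_ hfin
  filter_upwards [hν1, eventually_gt_atTop 0] with t ht ht0
  have h2 : (0:ℝ) < (ν t : ℝ) := by exact_mod_cast (by omega : 0 < ν t)
  show (t / (ν t : ℝ))⁻¹ = (ν t : ℝ) / t
  rw [inv_div]

private lemma aux_nu_measurable {Ω : Type*} [MeasurableSpace Ω] (D : ℝ → Ω → ℝ)
    (hmeas : ∀ s : ℝ, Measurable (D s)) (t : ℝ) :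
    Measurable (fun ω => sInf {n : ℕ | t < D (n:ℝ) ω}) := by
  have hA : ∀ n : ℕ, MeasurableSet {ω | t < D (n:ℝ) ω} :=
    fun n => measurableSet_lt measurable_const (hmeas _)
  refine measurable_to_countable' (fun k => ?_)
  rcases Nat.eq_zero_or_pos k with hk | hk
  · subst hk
    have : (fun ω => sInf {n : ℕ | t < D (n:ℝ) ω}) ⁻¹' {0}
        = {ω | t < D ((0:ℕ):ℝ) ω} ∪ ⋂ n : ℕ, {ω | t < D ((n:ℕ):ℝ) ω}ᶜ := by
      ext ω
      simp only [Set.mem_preimage, Set.mem_singleton_iff, Set.mem_union, Set.mem_iInter,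
        Set.mem_compl_iff, Set.mem_setOf_eq, Nat.sInf_eq_zero]
      constructor
      · rintro (h0 | hemp)
        · exact Or.inl h0
        · exact Or.inr (fun n hn => by
            have : n ∈ {n : ℕ | t < D (n:ℝ) ω} := hn
            rw [hemp] at this
            exact this)
      · rintro (h0 | hall)
        · exact Or.inl h0
        · refine Or.inr (Set.eq_empty_iff_forall_notMem.mpr (fun n hn => hall n hn))
    rw [this]
    exact (hA 0).union (MeasurableSet.iInter (fun n => (hA n).compl))
  · have : (fun ω => sInf {n : ℕ | t < D (n:ℝ) ω}) ⁻¹' {k}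
        = {ω | t < D ((k:ℕ):ℝ) ω} ∩ ⋂ j ∈ Finset.range k, {ω | t < D ((j:ℕ):ℝ) ω}ᶜ := by
      ext ω
      simp only [Set.mem_preimage, Set.mem_singleton_iff, Set.mem_inter_iff, Set.mem_iInter,
        Set.mem_compl_iff, Set.mem_setOf_eq, Finset.mem_range]
      constructor
      · intro hs
        have hne : {n : ℕ | t < D (n:ℝ) ω}.Nonempty := by
          by_contra hc
          rw [Set.not_nonempty_iff_eq_empty] at hc
          rw [hc] at hs
          simp [Nat.sInf_empty] at hs
          omega
        constructor
        · have := Nat.sInf_mem hne; rw [hs] at this; exact this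
        · intro j hj hmem
          have : sInf {n : ℕ | t < D (n:ℝ) ω} ≤ j :=
            Nat.sInf_le (show j ∈ {n : ℕ | t < D (n:ℝ) ω} from hmem)
          omega
      · rintro ⟨hk1, hk2⟩
        have h1 : sInf {n : ℕ | t < D (n:ℝ) ω} ≤ k := Nat.sInf_le hk1
        have h2 : ∀ j < k, j ∉ {n : ℕ | t < D (n:ℝ) ω} := fun j hj => hk2 j hj
        by_contra hne
        have hlt : sInf {n : ℕ | t < D (n:ℝ) ω} < k := lt_of_le_of_ne h1 hne
        exact h2 _ hlt (Nat.sInf_mem ⟨k, hk1⟩)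
    rw [this]
    exact (hA k).inter (MeasurableSet.biInter (Set.to_countable _) (fun j _ => (hA j).compl))

private lemma aux_inf_rat_eq (f : ℝ → ℝ) (t : ℝ) (hmono : MonotoneOn f (Ici 0))
    (hne : ∃ n : ℕ, t < f n) :
    sInf {u : ℝ | 0 ≤ u ∧ t < f u} =
      (⨅ q : ℚ, (if 0 ≤ (q:ℝ) ∧ t < f q then ENNReal.ofReal q else ⊤)).toReal := by
  obtain ⟨n, hn⟩ := hne
  set A := {u : ℝ | 0 ≤ u ∧ t < f u} with hA
  have hAne : A.Nonempty := ⟨n, Nat.cast_nonneg n, hn⟩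
  have hAbdd : BddBelow A := ⟨0, fun u hu => hu.1⟩
  have hA0 : 0 ≤ sInf A := le_csInf hAne (fun u hu => hu.1)
  set I := ⨅ q : ℚ, (if 0 ≤ (q:ℝ) ∧ t < f q then ENNReal.ofReal q else ⊤) with hI
  have hItop : I ≠ ⊤ := by
    have : I ≤ ENNReal.ofReal ((n:ℚ):ℝ) := by
      refine le_trans (iInf_le _ (n:ℚ)) ?_
      rw [if_pos ⟨by exact_mod_cast Nat.cast_nonneg n, by push_cast; exact hn⟩]
    exact ne_top_of_le_ne_top ENNReal.ofReal_ne_top this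
  refine le_antisymm ?_ ?_
  · have h1 : ENNReal.ofReal (sInf A) ≤ I := by
      refine le_iInf (fun q => ?_)
      by_cases hq : 0 ≤ (q:ℝ) ∧ t < f q
      · rw [if_pos hq]
        exact ENNReal.ofReal_le_ofReal (csInf_le hAbdd ⟨hq.1, hq.2⟩)
      · rw [if_neg hq]; exact le_top
    have := ENNReal.toReal_mono hItop h1
    rwa [ENNReal.toReal_ofReal hA0] at this
  · refine le_csInf hAne (fun u hu => ?_)
    refine le_of_forall_pos_le_add (fun ε hε => ?_)
    obtain ⟨q, hq1, hq2⟩ := exists_rat_btwn (by linarith : u < u + ε)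
    have hq0 : 0 ≤ (q:ℝ) := le_trans hu.1 (le_of_lt hq1)
    have hfq : t < f q := lt_of_lt_of_le hu.2 (hmono hu.1 hq0 (le_of_lt hq1))
    have h2 : I ≤ ENNReal.ofReal q := by
      refine le_trans (iInf_le _ q) ?_
      rw [if_pos ⟨hq0, hfq⟩]
    have := ENNReal.toReal_mono ENNReal.ofReal_ne_top h2
    rw [ENNReal.toReal_ofReal hq0] at this
    linarith

private lemma aux_sandwich (f : ℝ → ℝ) (t : ℝ) (hmono : MonotoneOn f (Ici 0))
    (hne : ∃ n : ℕ, t < f n) :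
    0 ≤ sInf {u : ℝ | 0 ≤ u ∧ t < f u} ∧
    sInf {u : ℝ | 0 ≤ u ∧ t < f u} ≤ ((sInf {n : ℕ | t < f n} : ℕ) : ℝ) ∧
    ((sInf {n : ℕ | t < f n} : ℕ) : ℝ) - 1 ≤ sInf {u : ℝ | 0 ≤ u ∧ t < f u} := by
  obtain ⟨n, hn⟩ := hne
  set ν : ℕ := sInf {n : ℕ | t < f n} with hν
  have hνmem : t < f ν := Nat.sInf_mem (⟨n, hn⟩ : {n : ℕ | t < f n}.Nonempty)
  set A := {u : ℝ | 0 ≤ u ∧ t < f u} with hA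
  have hAne : A.Nonempty := ⟨ν, Nat.cast_nonneg ν, hνmem⟩
  have hAbdd : BddBelow A := ⟨0, fun u hu => hu.1⟩
  refine ⟨le_csInf hAne (fun u hu => hu.1), csInf_le hAbdd ⟨Nat.cast_nonneg ν, hνmem⟩, ?_⟩
  refine le_csInf hAne (fun u hu => ?_)
  rcases Nat.eq_zero_or_pos ν with hν0 | hν0
  · rw [hν0]; simp; linarith [hu.1]
  · by_contra hc
    push_neg at hc
    have hcast : ((ν:ℝ)) - 1 = ((ν - 1 : ℕ) : ℝ) := by
      have : (1:ℝ) ≤ (ν:ℝ) := by exact_mod_cast hν0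
      push_cast [Nat.cast_sub hν0]
      ring
    have hu1 : u ≤ ((ν - 1 : ℕ) : ℝ) := by rw [← hcast]; linarith
    have hf1 : f u ≤ f ((ν - 1 : ℕ) : ℝ) :=
      hmono (mem_Ici.mpr hu.1) (mem_Ici.mpr (Nat.cast_nonneg _)) hu1
    have hf2 : f ((ν - 1 : ℕ) : ℝ) ≤ t := by
      have hnm : (ν - 1 : ℕ) ∉ {n : ℕ | t < f n} := Nat.notMem_of_lt_sInf (by omega)
      simpa using not_lt.mp (fun hcon => hnm hcon)
    linarith [hu.2]

/-- **renewal theorem.** For a Lévy subordinator `D` with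
`0 < 𝔼[D 1] < ∞`, inverse `E t = inf {s ≥ 0 : D s > t}` and renewal function
`U t = 𝔼[E t]`, one has `U t / t → 1 / 𝔼[D 1]` as `t → ∞`. -/
theorem inverse_subordinator_renewal_theorem {Ω : Type*} [MeasurableSpace Ω]
    (P : Measure Ω) (D : ℝ → Ω → ℝ) (φ : ℝ → ℝ)
    (h : IsLevySubordinator P D φ)
    (hInt : Integrable (D 1) P) (hpos : 0 < ∫ ω, D 1 ω ∂P)
    (E : ℝ → Ω → ℝ) (hE : ∀ t ω, E t ω = sInf {u : ℝ | 0 ≤ u ∧ t < D u ω})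
    (U : ℝ → ℝ) (hU : ∀ t : ℝ, U t = ∫ ω, E t ω ∂P) :
    Tendsto (fun t : ℝ => U t / t) atTop (nhds (1 / ∫ ω, D 1 ω ∂P)) := by
  classical
  haveI : IsProbabilityMeasure P := h.isProbability
  set m : ℝ := ∫ ω, D 1 ω ∂P with hm_def
  have hmpos : 0 < m := hpos
  -- increments
  set X : ℕ → Ω → ℝ := fun n ω => D ((n:ℝ)+1) ω - D (n:ℝ) ω with hX
  have hXmeas : ∀ n, Measurable (X n) := fun n => (h.measurable _).sub (h.measurable _)
  have hXmap : ∀ n : ℕ, P.map (X n) = P.map (D 1) := by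
    intro n
    have := h.stationaryIncrements (n:ℝ) ((n:ℝ)+1) (Nat.cast_nonneg n) (by linarith)
    simpa using this
  have hindepn : ∀ n : ℕ, iIndepFun (fun i : Fin n => X (i:ℕ)) P := by
    intro n
    have h1 := h.indepIncrements n (fun k => (k : ℝ)) (by simp) (fun a b hab => Nat.cast_le.mpr hab)
    have he : (fun i : Fin n => fun ω => D (((i:ℕ) + 1 : ℕ):ℝ) ω - D (((i:ℕ):ℕ):ℝ) ω)
        = fun i : Fin n => X (i:ℕ) := by
      funext i ω
      simp only [hX]
      push_cast
      ring_nf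
    rw [he] at h1
    exact h1
  have hXident : ∀ n, IdentDistrib (X n) (X 0) P P := by
    intro n
    exact ⟨(hXmeas n).aemeasurable, (hXmeas 0).aemeasurable, by rw [hXmap n, hXmap 0]⟩
  have hXindep : Pairwise (Function.onFun (IndepFun · · P) X) := by
    intro i j hij
    have h2 := hindepn (max i j + 1)
    have hi : i < max i j + 1 := Nat.lt_succ_of_le (le_max_left _ _)
    have hj : j < max i j + 1 := Nat.lt_succ_of_le (le_max_right _ _)
    have := h2.indepFun (i := ⟨i, hi⟩) (j := ⟨j, hj⟩) (by simpa using hij)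
    simpa using this
  have h0int : Integrable (D 0) P := by
    refine (integrable_congr ?_).mp (integrable_zero _ _ P)
    filter_upwards [h.init] with ω hω; simp [hω]
  have hX0int : Integrable (X 0) P := by
    rw [show X 0 = D 1 - D 0 by funext ω; simp [hX]]
    exact hInt.sub h0int
  have hmean : ∫ ω, X 0 ω ∂P = m := by
    have h0 : ∫ ω, D 0 ω ∂P = 0 := by
      rw [integral_eq_zero_of_ae]; exact h.init.mono (fun ω hω => hω)
    simp only [hX]
    rw [show ((0:ℕ):ℝ)+1 = 1 by norm_num, show ((0:ℕ):ℝ) = 0 from Nat.cast_zero]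
    rw [integral_sub hInt h0int]
    simp [h0, hm_def]
  have hDsum : ∀ᵐ ω ∂P, ∀ k : ℕ, ∑ i ∈ Finset.range k, X i ω = D (k:ℝ) ω := by
    filter_upwards [h.init] with ω h0
    intro k
    have heq : ∀ i : ℕ, X i ω = D (((i+1 : ℕ)):ℝ) ω - D ((i:ℕ):ℝ) ω := by
      intro i; simp only [hX]; push_cast; ring_nf
    calc ∑ i ∈ Finset.range k, X i ω
        = ∑ i ∈ Finset.range k, (D (((i+1 : ℕ)):ℝ) ω - D ((i:ℕ):ℝ) ω) :=
          Finset.sum_congr rfl (fun i _ => heq i)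
      _ = D (k:ℝ) ω - D ((0:ℕ):ℝ) ω := Finset.sum_range_sub (fun j => D ((j:ℕ):ℝ) ω) k
      _ = D (k:ℝ) ω := by simp [h0]
  have hslln : ∀ᵐ ω ∂P, Tendsto (fun n : ℕ => D (n:ℝ) ω / n) atTop (𝓝 m) := by
    have hs := strong_law_ae_real X hX0int hXindep hXident
    rw [hmean] at hs
    filter_upwards [hs, hDsum] with ω hω hsum
    simpa only [hsum] using hω
  -- the discrete first-passage process ν
  set ν : ℝ → Ω → ℕ := fun t ω => sInf {n : ℕ | t < D (n:ℝ) ω} with hνdef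
  have hνmeas : ∀ t, Measurable (ν t) := fun t => aux_nu_measurable D h.measurable t
  have hmono_nat : ∀ᵐ ω ∂P, Monotone (fun n : ℕ => D (n:ℝ) ω) := by
    filter_upwards [h.mono] with ω hm'
    intro a b hab
    exact hm' (mem_Ici.mpr (Nat.cast_nonneg a)) (mem_Ici.mpr (Nat.cast_nonneg b))
      (Nat.cast_le.mpr hab)
  have hν_asymp : ∀ᵐ ω ∂P, Tendsto (fun t : ℝ => ((ν t ω : ℕ):ℝ)/t) atTop (𝓝 m⁻¹) := by
    filter_upwards [hslln, hmono_nat] with ω h1 h2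
    exact aux_nu_asymp _ m hmpos h2 h1
  have hD_top : ∀ᵐ ω ∂P, ∀ t : ℝ, ∃ n : ℕ, t < D (n:ℝ) ω := by
    filter_upwards [hslln] with ω h1
    intro t
    have hf_top : Tendsto (fun n : ℕ => D (n:ℝ) ω) atTop atTop := by
      have ht1 : Tendsto (fun n : ℕ => (D (n:ℝ) ω / n) * n) atTop atTop :=
        Tendsto.pos_mul_atTop hmpos h1 tendsto_natCast_atTop_atTop
      refine Tendsto.congr' ?_ ht1
      filter_upwards [eventually_ge_atTop 1] with n hn
      field_simp [Nat.cast_ne_zero.mpr (by omega : n ≠ 0)]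
    exact (hf_top.eventually (eventually_gt_atTop t)).exists
  -- sup of truncated means
  set mb : ℕ → ℝ≥0∞ := fun b => ∫⁻ ω, ENNReal.ofReal (min (b:ℝ) (max 0 (X 0 ω))) ∂P with hmbdef
  have hD1nn : 0 ≤ᵐ[P] D 1 := by
    filter_upwards [h.nonneg] with ω hω using hω 1 zero_le_one
  have hofrealm : ∫⁻ ω, ENNReal.ofReal (D 1 ω) ∂P = ENNReal.ofReal m :=
    (ofReal_integral_eq_lintegral_ofReal hInt hD1nn).symm
  have hmb_sup : ∀ δ : ℝ, 0 < δ → ∃ b : ℕ, ENNReal.ofReal (m - δ) < mb b := by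
    intro δ hδ
    have hsup : ⨆ b : ℕ, mb b = ENNReal.ofReal m := by
      have h1 : ⨆ b : ℕ, mb b = ∫⁻ ω, ⨆ b : ℕ, ENNReal.ofReal (min (b:ℝ) (max 0 (X 0 ω))) ∂P := by
        refine (lintegral_iSup (fun b => ?_) (fun b b' hbb' ω => ?_)).symm
        · exact ENNReal.measurable_ofReal.comp
            ((measurable_const.min (measurable_const.max (hXmeas 0))))
        · exact ENNReal.ofReal_le_ofReal (min_le_min (Nat.cast_le.mpr hbb') le_rfl)
      have h2 : ∀ ω, (⨆ b : ℕ, ENNReal.ofReal (min (b:ℝ) (max 0 (X 0 ω))))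
          = ENNReal.ofReal (max 0 (X 0 ω)) := by
        intro ω
        refine le_antisymm (iSup_le (fun b => ENNReal.ofReal_le_ofReal (min_le_right _ _))) ?_
        obtain ⟨b, hb⟩ := exists_nat_ge (max 0 (X 0 ω))
        refine le_iSup_of_le b (le_of_eq ?_)
        rw [min_eq_right hb]
      have h3 : ∫⁻ ω, ENNReal.ofReal (max 0 (X 0 ω)) ∂P = ENNReal.ofReal m := by
        rw [← hofrealm]
        refine lintegral_congr_ae ?_
        filter_upwards [h.init, hD1nn] with ω h0 hnn
        have hnn' : (0:ℝ) ≤ D 1 ω := hnn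
        have : X 0 ω = D 1 ω := by
          simp only [hX]
          rw [show ((0:ℕ):ℝ)+1 = 1 by norm_num, show ((0:ℕ):ℝ) = 0 from Nat.cast_zero, h0]
          ring
        rw [this, max_eq_right hnn']
      rw [h1]
      simp_rw [h2]
      exact h3
    have hlt : ENNReal.ofReal (m - δ) < ⨆ b : ℕ, mb b := by
      rw [hsup]
      exact ENNReal.ofReal_lt_ofReal_iff hmpos |>.mpr (by linarith)
    exact lt_iSup_iff.mp hlt
  -- key bound : mb b * ∫⁻ ν t ≤ t + b
  have hkey : ∀ b : ℕ, ∀ t : ℝ, 0 ≤ t →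
      mb b * ∫⁻ ω, ((ν t ω : ℕ) : ℝ≥0∞) ∂P ≤ ENNReal.ofReal (t + b) := by
    intro b t ht
    have hwald := aux_wald_bound P X hXmeas hindepn (fun i => by rw [hXmap i, hXmap 0]) b t ht
    have hincl : ∀ k : ℕ, P {ω | k < ν t ω}
        ≤ P {ω | ∑ j ∈ Finset.range k, min (b:ℝ) (max 0 (X j ω)) ≤ t} := by
      intro k
      refine measure_mono_ae ?_
      filter_upwards [hDsum, hmono_nat] with ω hsum hmono'
      intro hk
      have hDk : D (k:ℝ) ω ≤ t := by
        by_contra hc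
        push_neg at hc
        have h1 : ν t ω ≤ k := Nat.sInf_le hc
        have h2 : k < ν t ω := hk
        omega
      have hXnn : ∀ j : ℕ, 0 ≤ X j ω := by
        intro j
        have := hmono' (Nat.le_succ j)
        simp only [hX]
        push_cast
        simp only [Nat.cast_succ] at this
        linarith
      have hle : ∑ j ∈ Finset.range k, min (b:ℝ) (max 0 (X j ω))
          ≤ ∑ j ∈ Finset.range k, X j ω := by
        refine Finset.sum_le_sum (fun j _ => ?_)
        rw [max_eq_right (hXnn j)]
        exact min_le_right _ _
      show ∑ j ∈ Finset.range k, min (b:ℝ) (max 0 (X j ω)) ≤ t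
      calc ∑ j ∈ Finset.range k, min (b:ℝ) (max 0 (X j ω))
          ≤ ∑ j ∈ Finset.range k, X j ω := hle
        _ = D (k:ℝ) ω := hsum k
        _ ≤ t := hDk
    calc mb b * ∫⁻ ω, ((ν t ω : ℕ) : ℝ≥0∞) ∂P
        = mb b * ∑' k : ℕ, P {ω | k < ν t ω} := by
          rw [aux_lintegral_nat_eq P (ν t) (hνmeas t)]
      _ ≤ mb b * ∑' k : ℕ, P {ω | ∑ j ∈ Finset.range k, min (b:ℝ) (max 0 (X j ω)) ≤ t} :=
          mul_le_mul_right (ENNReal.tsum_le_tsum hincl) _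
      _ ≤ ENNReal.ofReal (t + b) := hwald
  -- finiteness of ∫⁻ ν t
  obtain ⟨b0, hb0⟩ := hmb_sup (m/2) (by positivity)
  have hb0pos : 0 < mb b0 := lt_of_le_of_lt zero_le hb0
  have hνfin : ∀ t : ℝ, 0 ≤ t → ∫⁻ ω, ((ν t ω : ℕ) : ℝ≥0∞) ∂P ≠ ⊤ := by
    intro t ht
    by_contra hc
    have := hkey b0 t ht
    rw [hc, ENNReal.mul_top (ne_of_gt hb0pos)] at this
    exact absurd (lt_of_le_of_lt this (ENNReal.ofReal_lt_top)) (lt_irrefl _)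
  set NT : ℝ → ℝ := fun t => (∫⁻ ω, ((ν t ω : ℕ) : ℝ≥0∞) ∂P).toReal with hNTdef
  have hνcastmeas : ∀ t, Measurable (fun ω => ((ν t ω : ℕ) : ℝ)) :=
    fun t => measurable_from_top.comp (hνmeas t)
  have hνint : ∀ t : ℝ, 0 ≤ t → Integrable (fun ω => ((ν t ω : ℕ) : ℝ)) P := by
    intro t ht
    refine ⟨(hνcastmeas t).aestronglyMeasurable, ?_⟩
    rw [hasFiniteIntegral_iff_ofReal (Eventually.of_forall (fun ω => Nat.cast_nonneg _))]
    have : ∀ ω, ENNReal.ofReal ((ν t ω : ℕ) : ℝ) = ((ν t ω : ℕ) : ℝ≥0∞) :=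
      fun ω => ENNReal.ofReal_natCast _
    simp_rw [this]
    exact lt_of_le_of_ne le_top (hνfin t ht)
  have hνintegral : ∀ t : ℝ, 0 ≤ t → ∫ ω, ((ν t ω : ℕ) : ℝ) ∂P = NT t := by
    intro t ht
    rw [integral_eq_lintegral_of_nonneg_ae (Eventually.of_forall (fun ω => Nat.cast_nonneg _))
      (hνcastmeas t).aestronglyMeasurable]
    congr 1
    refine lintegral_congr (fun ω => ?_)
    exact ENNReal.ofReal_natCast _
  -- E facts
  have hEbound : ∀ t : ℝ, ∀ᵐ ω ∂P, 0 ≤ E t ω ∧ E t ω ≤ ((ν t ω : ℕ) : ℝ) ∧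
      ((ν t ω : ℕ) : ℝ) - 1 ≤ E t ω := by
    intro t
    filter_upwards [h.mono, hD_top] with ω h1 h2
    rw [hE t ω]
    exact aux_sandwich (fun u => D u ω) t h1 (h2 t)
  have hEmeas : ∀ t : ℝ, AEStronglyMeasurable (E t) P := by
    intro t
    refine ⟨fun ω => (⨅ q : ℚ, (if 0 ≤ (q:ℝ) ∧ t < D (q:ℝ) ω then ENNReal.ofReal q
        else ⊤)).toReal, ?_, ?_⟩
    · refine (ENNReal.measurable_toReal.comp (Measurable.iInf (fun q => ?_))).stronglyMeasurable
      have hms : MeasurableSet {ω | 0 ≤ (q:ℝ) ∧ t < D (q:ℝ) ω} := by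
        by_cases hq : 0 ≤ (q:ℝ)
        · have : {ω | 0 ≤ (q:ℝ) ∧ t < D (q:ℝ) ω} = {ω | t < D (q:ℝ) ω} := by
            ext ω; simp [hq]
          rw [this]
          exact measurableSet_lt measurable_const (h.measurable _)
        · have : {ω | 0 ≤ (q:ℝ) ∧ t < D (q:ℝ) ω} = ∅ := by
            ext ω; simp [hq]
          rw [this]
          exact MeasurableSet.empty
      exact Measurable.ite hms measurable_const measurable_const
    · filter_upwards [h.mono, hD_top] with ω h1 h2
      rw [hE t ω]
      exact aux_inf_rat_eq (fun u => D u ω) t h1 (h2 t)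
  have hEint : ∀ t : ℝ, 0 ≤ t → Integrable (E t) P := by
    intro t ht
    refine Integrable.mono (hνint t ht) (hEmeas t) ?_
    filter_upwards [hEbound t] with ω ⟨hb1, hb2, _⟩
    rw [Real.norm_eq_abs, Real.norm_eq_abs, abs_of_nonneg hb1,
      abs_of_nonneg (Nat.cast_nonneg _)]
    exact hb2
  have hUclose : ∀ t : ℝ, 0 ≤ t → |U t - NT t| ≤ 1 := by
    intro t ht
    rw [hU t, ← hνintegral t ht, ← integral_sub (hEint t ht) (hνint t ht)]
    calc |∫ ω, (E t ω - ((ν t ω : ℕ) : ℝ)) ∂P|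
        ≤ ∫ ω, |E t ω - ((ν t ω : ℕ) : ℝ)| ∂P := by
          simpa [Real.norm_eq_abs] using
            norm_integral_le_integral_norm (fun ω => E t ω - ((ν t ω : ℕ) : ℝ)) (μ := P)
      _ ≤ ∫ _ω, (1:ℝ) ∂P := by
          refine integral_mono_ae ((hEint t ht).sub (hνint t ht)).abs (integrable_const 1) ?_
          filter_upwards [hEbound t] with ω ⟨hb1, hb2, hb3⟩
          rw [abs_le]
          constructor <;> linarith
      _ = 1 := by simp
  -- upper bound for NT t / t
  have hNT_upper : ∀ ε : ℝ, 0 < ε → ∀ᶠ t in atTop, NT t / t < m⁻¹ + ε := by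
    intro ε hε
    set r : ℝ := (m⁻¹ + ε/2)⁻¹ with hr
    have hr0 : 0 < r := by positivity
    have hrinv : 1/r = m⁻¹ + ε/2 := by
      rw [hr, one_div, inv_inv]
    have hrm : r < m := by
      have h2 : (m⁻¹ + ε/2)⁻¹ < (m⁻¹)⁻¹ := by
        apply inv_strictAnti₀ (by positivity)
        have : (0:ℝ) < ε/2 := by positivity
        linarith
      rwa [inv_inv] at h2
    obtain ⟨b, hb⟩ := hmb_sup (m - r) (by linarith)
    have hbr : ENNReal.ofReal r < mb b := by
      have : m - (m - r) = r := by ring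
      rwa [this] at hb
    have hNTb : ∀ t : ℝ, 0 ≤ t → r * NT t ≤ t + b := by
      intro t ht
      have h1 : ENNReal.ofReal r * ∫⁻ ω, ((ν t ω : ℕ) : ℝ≥0∞) ∂P ≤ ENNReal.ofReal (t + b) :=
        le_trans (mul_le_mul_left (le_of_lt hbr) _) (hkey b t ht)
      have h2 := ENNReal.toReal_mono ENNReal.ofReal_ne_top h1
      rw [ENNReal.toReal_mul, ENNReal.toReal_ofReal (le_of_lt hr0),
        ENNReal.toReal_ofReal (by positivity)] at h2
      exact h2
    have hlim : Tendsto (fun t : ℝ => 1/r + ((b:ℝ)/r)/t) atTop (𝓝 (1/r)) := by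
      have := tendsto_const_nhds (α := ℝ) (x := 1/r) (f := atTop)
      have h2 : Tendsto (fun t : ℝ => ((b:ℝ)/r)/t) atTop (𝓝 0) :=
        Tendsto.div_atTop tendsto_const_nhds tendsto_id
      simpa using this.add h2
    have hev : ∀ᶠ t in atTop, 1/r + ((b:ℝ)/r)/t < 1/r + ε/2 := by
      refine hlim.eventually_lt_const ?_
      linarith
    filter_upwards [hev, eventually_gt_atTop 0] with t h1 ht0
    have h2 : NT t ≤ (t + b)/r := by
      rw [le_div_iff₀ hr0, mul_comm]
      exact hNTb t (le_of_lt ht0)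
    have h3 : NT t / t ≤ ((t + b)/r)/t :=
      div_le_div_of_nonneg_right h2 (le_of_lt ht0)
    have h4 : ((t + b)/r)/t = 1/r + ((b:ℝ)/r)/t := by
      field_simp
      try ring
    calc NT t / t ≤ ((t + b)/r)/t := h3
      _ = 1/r + ((b:ℝ)/r)/t := h4
      _ < 1/r + ε/2 := h1
      _ = m⁻¹ + ε := by rw [hrinv]; ring
  -- lower bound for NT t / t via Fatou
  have hNT_lower : ∀ ε : ℝ, 0 < ε → ∀ᶠ t in atTop, m⁻¹ - ε < NT t / t := by
    intro ε hε
    by_contra hc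
    rw [not_eventually] at hc
    have hfreq := frequently_atTop.mp hc
    have hchoice : ∀ n : ℕ, ∃ t : ℝ, t ≥ max (n:ℝ) 1 ∧ ¬ (m⁻¹ - ε < NT t / t) := by
      intro n
      obtain ⟨t, ht1, ht2⟩ := hfreq (max (n:ℝ) 1)
      exact ⟨t, ht1, ht2⟩
    choose u hu1 hu2 using hchoice
    have hu_pos : ∀ n, (0:ℝ) < u n := fun n => lt_of_lt_of_le zero_lt_one
      (le_trans (le_max_right _ _) (hu1 n))
    have hu_top : Tendsto u atTop atTop :=
      tendsto_atTop_mono (fun n => le_trans (le_max_left _ _) (hu1 n)) tendsto_natCast_atTop_atTop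
    set f : ℕ → Ω → ℝ≥0∞ := fun n ω => ((ν (u n) ω : ℕ) : ℝ≥0∞) / ENNReal.ofReal (u n) with hf
    have hfmeas : ∀ n, Measurable (f n) := by
      intro n
      exact (measurable_from_top.comp (hνmeas (u n))).div measurable_const
    have hfatou := lintegral_liminf_le hfmeas (μ := P) (u := atTop)
    have hliminf_ae : ∀ᵐ ω ∂P, liminf (fun n => f n ω) atTop = ENNReal.ofReal m⁻¹ := by
      filter_upwards [hν_asymp] with ω hω
      have htend : Tendsto (fun n => f n ω) atTop (𝓝 (ENNReal.ofReal m⁻¹)) := by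
        have h1 : Tendsto (fun n => ((ν (u n) ω : ℕ) : ℝ) / u n) atTop (𝓝 m⁻¹) :=
          hω.comp hu_top
        have h2 : Tendsto (fun n => ENNReal.ofReal (((ν (u n) ω : ℕ) : ℝ) / u n)) atTop
            (𝓝 (ENNReal.ofReal m⁻¹)) :=
          (ENNReal.continuous_ofReal.tendsto _).comp h1
        refine Tendsto.congr (fun n => ?_) h2
        rw [ENNReal.ofReal_div_of_pos (hu_pos n), ENNReal.ofReal_natCast]
      exact htend.liminf_eq
    have hlhs : ENNReal.ofReal m⁻¹ ≤ liminf (fun n => ∫⁻ ω, f n ω ∂P) atTop := by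
      refine le_trans (le_of_eq ?_) hfatou
      rw [lintegral_congr_ae hliminf_ae]
      simp
    have hrhs : liminf (fun n => ∫⁻ ω, f n ω ∂P) atTop ≤ ENNReal.ofReal (m⁻¹ - ε) := by
      have hint_eq : ∀ n : ℕ, ∫⁻ ω, f n ω ∂P = ENNReal.ofReal (NT (u n) / u n) := by
        intro n
        have h1 : ∫⁻ ω, f n ω ∂P = (∫⁻ ω, ((ν (u n) ω : ℕ) : ℝ≥0∞) ∂P) / ENNReal.ofReal (u n) := by
          have hcast : Measurable (fun ω => ((ν (u n) ω : ℕ) : ℝ≥0∞)) :=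
            measurable_from_top.comp (hνmeas (u n))
          simp only [hf, ENNReal.div_eq_inv_mul]
          rw [lintegral_const_mul _ hcast]
        rw [h1]
        have h2 : ∫⁻ ω, ((ν (u n) ω : ℕ) : ℝ≥0∞) ∂P = ENNReal.ofReal (NT (u n)) := by
          rw [hNTdef]
          exact (ENNReal.ofReal_toReal (hνfin (u n) (le_of_lt (hu_pos n)))).symm
        rw [h2, ← ENNReal.ofReal_div_of_pos (hu_pos n)]
      have hboundn : ∀ n : ℕ, ∫⁻ ω, f n ω ∂P ≤ ENNReal.ofReal (m⁻¹ - ε) := by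
        intro n
        rw [hint_eq n]
        exact ENNReal.ofReal_le_ofReal (not_lt.mp (hu2 n))
      exact liminf_le_of_frequently_le (Frequently.of_forall hboundn)
    have hcontra := le_trans hlhs hrhs
    rcases le_or_gt m⁻¹ (m⁻¹ - ε) with hle | hlt
    · linarith
    · have h1 : (0:ℝ) < m⁻¹ := by positivity
      rcases le_or_gt (m⁻¹ - ε) 0 with h2 | h2
      · rw [ENNReal.ofReal_eq_zero.mpr h2] at hcontra
        exact absurd (le_antisymm hcontra zero_le) (ne_of_gt (ENNReal.ofReal_pos.mpr h1))
      · rw [ENNReal.ofReal_le_ofReal_iff (le_of_lt h2)] at hcontra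
        linarith
  -- NT t / t → 1/m
  have hNT_tendsto : Tendsto (fun t => NT t / t) atTop (𝓝 m⁻¹) := by
    rw [Metric.tendsto_nhds]
    intro ε hε
    filter_upwards [hNT_upper ε hε, hNT_lower ε hε] with t h1 h2
    rw [Real.dist_eq, abs_lt]
    constructor <;> linarith
  -- difference goes to zero
  have hdiff : Tendsto (fun t => (U t - NT t)/t) atTop (𝓝 0) := by
    have hb : ∀ᶠ t in atTop, |(U t - NT t)/t| ≤ 1/t := by
      filter_upwards [eventually_ge_atTop 1] with t ht
      rw [abs_div, abs_of_nonneg (by linarith : (0:ℝ) ≤ t)]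
      exact div_le_div_of_nonneg_right (hUclose t (by linarith)) (by linarith)
    have h1t : Tendsto (fun t : ℝ => 1/t) atTop (𝓝 (0:ℝ)) := by
      simpa [one_div] using (tendsto_inv_atTop_zero : Tendsto (fun r : ℝ => r⁻¹) atTop (𝓝 0))
    refine squeeze_zero_norm' ?_ h1t
    filter_upwards [hb] with t ht
    simpa [Real.norm_eq_abs, abs_div] using ht
  have hfinal := hNT_tendsto.add hdiff
  rw [add_zero] at hfinal
  rw [show (1 : ℝ) / m = m⁻¹ from one_div m]
  refine Tendsto.congr (fun t => ?_) hfinal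
  rw [← add_div, add_sub_cancel]
end
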